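/- arXiv:2411.10641 — 5 statements merged into one kernel-verified Lean document; each statement's English description precedes it below -/
import Mathlib

section
/- Let F(z,w) = ∑_{n=0}^∞ fₙ(z)wⁿ be a Hartogs series, let U ⊆ D₁ be a nonempty connected open set, let g be holomorphic on U and not identically zero, and let E := {z ∈ U : g(z) = 0}. If F converges and is holomorphic on (U \ E) × D₂, then F converges and is holomorphic on U × D₂. -/
open Filter Topology
open scoped ENNReal

noncomputable section

/-- The open disk `{w : ℂ | |w| < R}` of radius `R ∈ (0, ∞]` centered at the origin. -/
def disk (R : ℝ≥0∞) : Set ℂ := {w : ℂ | (‖w‖₊ : ℝ≥0∞) < R}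

/-- The Hartogs series `∑ fₙ(z) wⁿ` converges at every point of `V` and
its sum function is holomorphic on `V`. -/
def HolSumOn {N : ℕ} (f : ℕ → (Fin N → ℂ) → ℂ) (V : Set ((Fin N → ℂ) × ℂ)) : Prop :=
  ∃ G : (Fin N → ℂ) × ℂ → ℂ, DifferentiableOn ℂ G V ∧
    ∀ p ∈ V, Tendsto (fun m => ∑ n ∈ Finset.range m, f n p.1 * p.2 ^ n) atTop (𝓝 (G p))

/-- The formal identity `∑_{j=0}^{t} Φⱼ · F^{t-j} = 0` in `O(D₁)[[w]]`, expressed through the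
coefficient families: every `w`-coefficient of the formal power series vanishes identically
on `D₁`. -/
def FormalAlgRel {N : ℕ} (f : ℕ → (Fin N → ℂ) → ℂ) (g : ℕ → ℕ → (Fin N → ℂ) → ℂ)
    (t : ℕ) (D₁ : Set (Fin N → ℂ)) : Prop :=
  ∀ m : ℕ, ∀ z ∈ D₁,
    (PowerSeries.coeff (R := (Fin N → ℂ) → ℂ) m
      (∑ j ∈ Finset.range (t + 1),
        PowerSeries.mk (g j) * (PowerSeries.mk f) ^ (t - j))) z = 0

/-- Condition (C1). -/
def CondC1 {N : ℕ} (f : ℕ → (Fin N → ℂ) → ℂ) (D₁ : Set (Fin N → ℂ)) (R : ℝ≥0∞) : Prop :=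
  ∃ S : Set (Fin N → ℂ), S ⊆ D₁ ∧ D₁ ⊆ closure S ∧
    ∀ α ∈ S, ∀ w ∈ disk R,
      ∃ l : ℂ, Tendsto (fun m => ∑ n ∈ Finset.range m, f n α * w ^ n) atTop (𝓝 l)

/-- Condition (C2). -/
def CondC2 {N : ℕ} (f : ℕ → (Fin N → ℂ) → ℂ) (D₁ : Set (Fin N → ℂ)) (R : ℝ≥0∞) : Prop :=
  ∃ (t : ℕ) (Φ : ℕ → (Fin N → ℂ) × ℂ → ℂ) (g : ℕ → ℕ → (Fin N → ℂ) → ℂ),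
    1 ≤ t ∧
    (∀ j, j ≤ t → DifferentiableOn ℂ (Φ j) (D₁ ×ˢ disk R)) ∧
    (∀ j n, j ≤ t → DifferentiableOn ℂ (g j n) D₁) ∧
    (∀ j, j ≤ t → ∀ p ∈ D₁ ×ˢ disk R,
      Tendsto (fun m => ∑ n ∈ Finset.range m, g j n p.1 * p.2 ^ n) atTop (𝓝 (Φ j p))) ∧
    (∃ p ∈ D₁ ×ˢ disk R, Φ 0 p ≠ 0) ∧
    FormalAlgRel f g t D₁



open Metric
open scoped NNReal

lemma hartogsAux_int {S : ℂ → ℂ} {r M : ℝ} (hr : 0 < r)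
    (hc : ContinuousOn S (Metric.sphere (0:ℂ) r))
    (hM : ∀ w : ℂ, ‖w‖ = r → ‖S w‖ ≤ M) :
    (2 * Real.pi)⁻¹ * (∫ θ in (0:ℝ)..2 * Real.pi, ‖S (circleMap 0 r θ)‖) ≤ M := by
  have hmem : ∀ θ : ℝ, circleMap 0 r θ ∈ Metric.sphere (0:ℂ) r :=
    fun θ => circleMap_mem_sphere 0 hr.le θ
  have hint : IntervalIntegrable (fun θ => ‖S (circleMap 0 r θ)‖) MeasureTheory.volume 0 (2*Real.pi) :=
    ((hc.comp (continuous_circleMap 0 r).continuousOn fun θ _ => hmem θ).norm).intervalIntegrable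
  have h1 : (∫ θ in (0:ℝ)..2 * Real.pi, ‖S (circleMap 0 r θ)‖) ≤ ∫ _ in (0:ℝ)..2 * Real.pi, M := by
    apply intervalIntegral.integral_mono_on Real.two_pi_pos.le hint (intervalIntegrable_const)
    intro θ _
    refine hM _ ?_
    have := hmem θ
    simp [norm_circleMap_zero, abs_of_pos hr]
  have h2 : (∫ _ in (0:ℝ)..2 * Real.pi, M) = 2 * Real.pi * M := by
    simp [mul_comm]
  calc (2 * Real.pi)⁻¹ * (∫ θ in (0:ℝ)..2 * Real.pi, ‖S (circleMap 0 r θ)‖)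
      ≤ (2 * Real.pi)⁻¹ * (2 * Real.pi * M) := by
        apply mul_le_mul_of_nonneg_left _ (by positivity)
        rw [← h2]; exact h1
    _ = M := by field_simp

set_option maxHeartbeats 1000000 in
lemma hartogsAux_coeff {a : ℕ → ℂ} {S : ℂ → ℂ} {r : ℝ≥0} {ρ M : ℝ} (hr : 0 < r) (hrρ : (r:ℝ) < ρ)
    (hd : DifferentiableOn ℂ S (Metric.closedBall 0 r))
    (hM : ∀ w : ℂ, ‖w‖ = r → ‖S w‖ ≤ M)
    (hconv : ∀ w : ℂ, ‖w‖ ≤ ρ →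
      Tendsto (fun m => ∑ n ∈ Finset.range m, a n * w ^ n) atTop (𝓝 (S w))) :
    ∀ n, ‖a n‖ ≤ M / (r:ℝ) ^ n := by
  have hrpos : (0:ℝ) < r := NNReal.coe_pos.mpr hr
  have hρpos : (0:ℝ) < ρ := hrpos.trans hrρ
  set q : FormalMultilinearSeries ℂ ℂ ℂ := FormalMultilinearSeries.ofScalars ℂ a with hq
  have hqn : ∀ n, ‖q n‖ = ‖a n‖ := fun n => FormalMultilinearSeries.ofScalars_norm ℂ a n
  -- terms at ρ tend to zero
  have htends := hconv (ρ:ℂ) (by simp [abs_of_pos hρpos])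
  have hterm : Tendsto (fun n => a n * (ρ:ℂ) ^ n) atTop (𝓝 0) := by
    have h1 : Tendsto (fun m => ∑ n ∈ Finset.range (m+1), a n * (ρ:ℂ) ^ n) atTop
        (𝓝 (S (ρ:ℂ))) := htends.comp (tendsto_add_atTop_nat 1)
    have := h1.sub htends
    simpa [Finset.sum_range_succ] using this
  obtain ⟨C, hC⟩ : ∃ C, ∀ n, ‖a n * (ρ:ℂ) ^ n‖ ≤ C := by
    obtain ⟨C, hC⟩ := (hterm.norm.bddAbove_range)
    exact ⟨C, fun n => hC (Set.mem_range_self n)⟩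
  have hnorm_rho : ∀ n, ‖a n * (ρ:ℂ) ^ n‖ = ‖a n‖ * ρ ^ n := by
    intro n
    simp [norm_mul, norm_pow, abs_of_pos hρpos]
  -- radius bound
  have hrad : (r : ℝ≥0∞) ≤ q.radius := by
    apply q.le_radius_of_bound C
    intro n
    rw [hqn]
    calc ‖a n‖ * (r:ℝ) ^ n ≤ ‖a n‖ * ρ ^ n := by
          apply mul_le_mul_of_nonneg_left (pow_le_pow_left₀ hrpos.le hrρ.le n) (norm_nonneg _)
      _ = ‖a n * (ρ:ℂ) ^ n‖ := (hnorm_rho n).symm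
      _ ≤ C := hC n
  -- summability inside radius ρ
  have hsummable : ∀ w : ℂ, ‖w‖ < ρ → Summable fun n => a n * w ^ n := by
    intro w hw
    apply Summable.of_norm
    have hgsum : Summable fun n : ℕ => C * (‖w‖ / ρ) ^ n :=
      (summable_geometric_of_lt_one (by positivity)
        (by rw [div_lt_one hρpos]; exact hw)).mul_left C
    refine Summable.of_nonneg_of_le (fun n => norm_nonneg _) (fun n => ?_) hgsum
    have h1 : ‖a n * w ^ n‖ = ‖a n‖ * ‖w‖ ^ n := by simp [norm_mul, norm_pow]
    have h2 : ‖a n‖ * ρ ^ n ≤ C := by rw [← hnorm_rho n]; exact hC n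
    calc ‖a n * w ^ n‖ = (‖a n‖ * ρ ^ n) * (‖w‖ / ρ) ^ n := by
          rw [h1, div_pow]; field_simp
      _ ≤ C * (‖w‖ / ρ) ^ n := mul_le_mul_of_nonneg_right h2 (by positivity)
  have hhs : ∀ w : ℂ, ‖w‖ < ρ → HasSum (fun n => a n * w ^ n) (S w) := by
    intro w hw
    have hs := hsummable w hw
    have := tendsto_nhds_unique hs.hasSum.tendsto_sum_nat (hconv w hw.le)
    exact this ▸ hs.hasSum
  -- power series on ball r
  have hqps : HasFPowerSeriesOnBall S q 0 r := by
    refine ⟨hrad, by exact_mod_cast hr, ?_⟩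
    intro y hy
    have hy' : ‖y‖ < (r:ℝ) := by
      rw [mem_emetric_ball_zero_iff] at hy
      exact_mod_cast hy
    have h := hhs y (hy'.trans hrρ)
    rw [zero_add]
    have hfun : (fun n => q n fun _ => y) = fun n => a n * y ^ n := by
      funext n
      rw [hq, FormalMultilinearSeries.ofScalars_apply_eq, smul_eq_mul]
    rw [hfun]
    exact h
  have hcps : HasFPowerSeriesOnBall S (cauchyPowerSeries S 0 r) 0 r :=
    hd.hasFPowerSeriesOnBall hr
  have heq : q = cauchyPowerSeries S 0 r :=
    hqps.hasFPowerSeriesAt.eq_formalMultilinearSeries hcps.hasFPowerSeriesAt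
  intro n
  have hb := norm_cauchyPowerSeries_le S 0 r n
  rw [← heq, hqn] at hb
  have hint : (2 * Real.pi)⁻¹ * (∫ θ in (0:ℝ)..2 * Real.pi, ‖S (circleMap 0 r θ)‖) ≤ M := by
    apply hartogsAux_int hrpos (hd.continuousOn.mono sphere_subset_closedBall) hM
  calc ‖a n‖ ≤ ((2 * Real.pi)⁻¹ * ∫ θ in (0:ℝ)..2 * Real.pi, ‖S (circleMap 0 r θ)‖)
        * |(r:ℝ)|⁻¹ ^ n := hb
    _ ≤ M * |(r:ℝ)|⁻¹ ^ n := by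
        apply mul_le_mul_of_nonneg_right hint (by positivity)
    _ = M / (r:ℝ) ^ n := by
        rw [abs_of_pos hrpos, div_eq_mul_inv, inv_pow]

set_option maxHeartbeats 1000000 in
lemma hartogsAux_fderiv {E : Type*} [NormedAddCommGroup E] [NormedSpace ℂ E]
    {F : E → ℂ} {x : E} {δ C : ℝ} (hδ : 0 < δ)
    (hd : DifferentiableOn ℂ F (Metric.ball x (2 * δ)))
    (hC : ∀ y ∈ Metric.ball x (2 * δ), ‖F y‖ ≤ C) :
    ‖fderiv ℂ F x‖ ≤ C / δ := by
  have hx : x ∈ Metric.ball x (2 * δ) := by simp [hδ]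
  have hC0 : 0 ≤ C := (norm_nonneg _).trans (hC x hx)
  have hFd : DifferentiableAt ℂ F x :=
    (hd x hx).differentiableAt ((Metric.isOpen_ball).mem_nhds hx)
  apply ContinuousLinearMap.opNorm_le_bound _ (by positivity)
  intro v
  rcases eq_or_ne v 0 with rfl | hv
  · simp
  have hc : 0 < ‖v‖ := norm_pos_iff.mpr hv
  set ρ : ℝ := δ / ‖v‖ with hρdef
  have hρ : 0 < ρ := by positivity
  set ρ' : ℝ≥0 := ⟨ρ, hρ.le⟩ with hρ'def
  have hρ'' : ((ρ' : ℝ)) = ρ := rfl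
  set L : ℂ → E := fun t => x + t • v with hL
  have hmaps : ∀ t : ℂ, ‖t‖ ≤ ρ → L t ∈ Metric.ball x (2 * δ) := by
    intro t ht
    have : dist (L t) x = ‖t‖ * ‖v‖ := by
      rw [hL]
      simp only [dist_eq_norm, add_sub_cancel_left, norm_smul]
    rw [Metric.mem_ball, this]
    calc ‖t‖ * ‖v‖ ≤ ρ * ‖v‖ := mul_le_mul_of_nonneg_right ht (norm_nonneg _)
      _ = δ := by rw [hρdef]; exact div_mul_cancel₀ δ hc.ne'
      _ < 2 * δ := by linarith
  have hLd : Differentiable ℂ L := (differentiable_id.smul_const v).const_add x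
  set φ : ℂ → ℂ := F ∘ L with hφ
  have hφd : DifferentiableOn ℂ φ (Metric.closedBall 0 ρ) := by
    apply hd.comp hLd.differentiableOn
    intro t ht
    exact hmaps t (by simpa [dist_eq_norm] using ht)
  have hφps : HasFPowerSeriesOnBall φ (cauchyPowerSeries φ 0 ρ') 0 ρ' := by
    apply DifferentiableOn.hasFPowerSeriesOnBall
    · rwa [hρ'']
    · exact_mod_cast hρ
  -- derivative of φ at 0 is fderiv F x v
  have hL0 : L 0 = x := by simp [hL]
  have hDL : HasDerivAt L v 0 := by
    simpa [hL] using ((hasDerivAt_id (0:ℂ)).smul_const v).const_add x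
  have hDφ : HasDerivAt φ (fderiv ℂ F x v) 0 := by
    have h1 : HasFDerivAt F (fderiv ℂ F x) (L 0) := hL0 ▸ hFd.hasFDerivAt
    exact h1.comp_hasDerivAt 0 hDL
  have hderiv : fderiv ℂ F x v = (cauchyPowerSeries φ 0 ρ') 1 fun _ => 1 := by
    rw [← hDφ.deriv]
    exact hφps.hasFPowerSeriesAt.deriv
  have hle1 : ‖(cauchyPowerSeries φ 0 ρ') 1 fun _ => (1:ℂ)‖ ≤ ‖(cauchyPowerSeries φ 0 ρ') 1‖ := by
    have := ((cauchyPowerSeries φ 0 ρ') 1).le_opNorm fun _ => (1:ℂ)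
    simpa using this
  have hsphere : ∀ w : ℂ, ‖w‖ = (ρ' : ℝ) → ‖φ w‖ ≤ C := by
    intro w hw
    exact hC _ (hmaps w (le_of_eq hw))
  have hint : (2 * Real.pi)⁻¹ * (∫ θ in (0:ℝ)..2 * Real.pi, ‖φ (circleMap 0 ρ' θ)‖) ≤ C := by
    apply hartogsAux_int hρ _ hsphere
    exact hφd.continuousOn.mono sphere_subset_closedBall
  have hb := norm_cauchyPowerSeries_le φ 0 ρ' 1
  calc ‖fderiv ℂ F x v‖ ≤ ‖(cauchyPowerSeries φ 0 ρ') 1‖ := by rw [hderiv]; exact hle1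
    _ ≤ ((2 * Real.pi)⁻¹ * ∫ θ in (0:ℝ)..2 * Real.pi, ‖φ (circleMap 0 ρ' θ)‖)
        * |(ρ' : ℝ)|⁻¹ ^ 1 := hb
    _ ≤ C * |(ρ' : ℝ)|⁻¹ ^ 1 := mul_le_mul_of_nonneg_right hint (by positivity)
    _ = C / δ * ‖v‖ := by
        rw [hρ'', abs_of_pos hρ, pow_one, hρdef]
        field_simp

/-- One-variable identity theorem transported along complex lines: if `g` is holomorphic on a
connected open set `U` and not identically zero, then `g` is not identically zero on any ball
around a point of `U`. -/
lemma hartogsAux_identity {E : Type*} [NormedAddCommGroup E] [NormedSpace ℂ E]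
    {U : Set E} (hUopen : IsOpen U) (hUconn : IsPreconnected U)
    {g : E → ℂ} (hg : DifferentiableOn ℂ g U) (hgne : ∃ z ∈ U, g z ≠ 0)
    {z₀ : E} (hz₀ : z₀ ∈ U) {t : ℝ} (ht : 0 < t) :
    ∃ z₁ ∈ Metric.ball z₀ t, g z₁ ≠ 0 := by
  by_contra hcon
  push_neg at hcon
  -- the set where g vanishes locally
  set V := {z : E | z ∈ U ∧ ∀ᶠ y in 𝓝 z, g y = 0} with hV_def
  have hVU : V ⊆ U := fun z hz => hz.1
  have hVzero : ∀ z ∈ V, g z = 0 := fun z hz => hz.2.self_of_nhds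
  -- V is open
  have hVopen : IsOpen V := by
    rw [Metric.isOpen_iff]
    rintro z ⟨hzU, hzev⟩
    obtain ⟨η₁, hη₁, hη₁z⟩ := Metric.eventually_nhds_iff.mp hzev
    obtain ⟨η₂, hη₂, hη₂U⟩ := Metric.isOpen_iff.mp hUopen z hzU
    refine ⟨min η₁ η₂, lt_min hη₁ hη₂, ?_⟩
    intro y hy
    refine ⟨hη₂U (Metric.ball_subset_ball (min_le_right _ _) hy), ?_⟩
    have : Metric.ball z (min η₁ η₂) ∈ 𝓝 y := Metric.isOpen_ball.mem_nhds hy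
    exact Filter.eventually_of_mem this
      (fun x hx => hη₁z (Metric.ball_subset_ball (min_le_left _ _) hx))
  -- key propagation: if z ∈ U adheres to V then z ∈ V
  have hkey : ∀ z ∈ U, z ∈ closure V → z ∈ V := by
    intro z hzU hzcl
    obtain ⟨τ₀, hτ₀, hτ₀U⟩ := Metric.isOpen_iff.mp hUopen z hzU
    set τ := τ₀ / 8 with hτ_def
    have hτ : 0 < τ := by positivity
    obtain ⟨z', hz'V, hz'd⟩ := Metric.mem_closure_iff.mp hzcl τ hτ
    have hz'ball : dist z' z < τ := by rwa [dist_comm] at hz'd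
    -- every point of ball z τ is a zero of g
    have hzero : ∀ y ∈ Metric.ball z τ, g y = 0 := by
      intro y hy
      set u := y - z' with hu_def
      set h : ℂ → ℂ := fun ζ => g (z' + ζ • u) with hh_def
      have hmaps : ∀ ζ : ℂ, ‖ζ‖ < 3 → z' + ζ • u ∈ U := by
        intro ζ hζ
        apply hτ₀U
        rw [Metric.mem_ball, dist_eq_norm]
        have h1 : z' + ζ • u - z = (z' - z) + ζ • u := by abel
        have h2 : ‖z' - z‖ < τ := by rwa [← dist_eq_norm]
        have h3 : ‖u‖ < 2 * τ := by
          rw [hu_def]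
          calc ‖y - z'‖ ≤ ‖y - z‖ + ‖z - z'‖ := norm_sub_le_norm_sub_add_norm_sub y z z'
            _ < τ + τ := by
                apply add_lt_add
                · rwa [← dist_eq_norm, ← Metric.mem_ball]
                · rwa [norm_sub_rev, ← dist_eq_norm]
            _ = 2 * τ := by ring
        rw [h1]
        calc ‖(z' - z) + ζ • u‖ ≤ ‖z' - z‖ + ‖ζ • u‖ := norm_add_le _ _
          _ ≤ ‖z' - z‖ + 3 * ‖u‖ := by
              rw [norm_smul]
              have := mul_le_mul_of_nonneg_right hζ.le (norm_nonneg u)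
              linarith
          _ < τ + 3 * (2 * τ) := by nlinarith
          _ < τ₀ := by rw [hτ_def]; linarith
      have hhd : DifferentiableOn ℂ h (Metric.ball 0 3) := by
        apply hg.comp ((differentiable_id.smul_const u).const_add z').differentiableOn
        intro ζ hζ
        exact hmaps ζ (by simpa [dist_eq_norm] using hζ)
      have hev : h =ᶠ[𝓝 (0:ℂ)] 0 := by
        obtain ⟨η, hη, hηz⟩ := Metric.eventually_nhds_iff.mp hz'V.2
        rw [Filter.eventuallyEq_iff_exists_mem]
        refine ⟨Metric.ball 0 (η / (‖u‖ + 1)), Metric.ball_mem_nhds _ (by positivity), ?_⟩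
        intro ζ hζ
        have hζ' : ‖ζ‖ < η / (‖u‖ + 1) := by simpa [dist_eq_norm] using hζ
        show g (z' + ζ • u) = 0
        apply hηz
        rw [dist_eq_norm, add_sub_cancel_left, norm_smul]
        calc ‖ζ‖ * ‖u‖ ≤ ‖ζ‖ * (‖u‖ + 1) := by
              apply mul_le_mul_of_nonneg_left (by linarith) (norm_nonneg _)
          _ < η / (‖u‖ + 1) * (‖u‖ + 1) := by
              apply mul_lt_mul_of_pos_right hζ' (by positivity)
          _ = η := by field_simp
      have hId := ((hhd.analyticOnNhd Metric.isOpen_ball).eqOn_zero_of_preconnected_of_eventuallyEq_zero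
        (convex_ball (0:ℂ) 3).isPreconnected
        (by simp : (0:ℂ) ∈ Metric.ball (0:ℂ) 3) hev)
        (by simp [Metric.mem_ball] : (1:ℂ) ∈ Metric.ball (0:ℂ) 3)
      have : z' + (1:ℂ) • u = y := by rw [hu_def]; simp
      rw [← this]
      exact hId
    refine ⟨hzU, ?_⟩
    exact Filter.eventually_of_mem (Metric.ball_mem_nhds z hτ) hzero
  -- conclude via preconnectedness
  have hz₀V : z₀ ∈ V := by
    refine ⟨hz₀, Filter.eventually_of_mem (Metric.ball_mem_nhds z₀ ht) hcon⟩
  have hUsub : U ⊆ V ∪ (closure V)ᶜ := by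
    intro z hz
    by_cases hcl : z ∈ closure V
    · exact Or.inl (hkey z hz hcl)
    · exact Or.inr hcl
  have hdisj : (U ∩ (V ∩ (closure V)ᶜ)).Nonempty → False := by
    rintro ⟨z, -, hzV, hzc⟩
    exact hzc (subset_closure hzV)
  have : ¬ (U ∩ (closure V)ᶜ).Nonempty := by
    intro hne
    exact hdisj (hUconn V (closure V)ᶜ hVopen (isClosed_closure).isOpen_compl hUsub
      ⟨z₀, hz₀, hz₀V⟩ hne)
  obtain ⟨z₂, hz₂U, hz₂⟩ := hgne
  apply hz₂
  apply hVzero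
  by_cases hcl : z₂ ∈ closure V
  · exact hkey z₂ hz₂U hcl
  · exact absurd ⟨z₂, hz₂U, hcl⟩ this

set_option maxHeartbeats 1000000 in
lemma hartogsAux_stepA {N : ℕ} {D₁ : Set (Fin N → ℂ)}
    {R : ℝ≥0∞} {f : ℕ → (Fin N → ℂ) → ℂ} (hf : ∀ n, DifferentiableOn ℂ (f n) D₁)
    {U : Set (Fin N → ℂ)} (hU : U ⊆ D₁) (hUopen : IsOpen U) (hUconn : IsPreconnected U)
    {g : (Fin N → ℂ) → ℂ} (hg : DifferentiableOn ℂ g U) (hgne : ∃ z ∈ U, g z ≠ 0)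
    {G : (Fin N → ℂ) × ℂ → ℂ}
    (hGd : DifferentiableOn ℂ G ((U ∩ {z | g z ≠ 0}) ×ˢ disk R))
    (hGs : ∀ p ∈ (U ∩ {z | g z ≠ 0}) ×ˢ disk R,
      Tendsto (fun m => ∑ n ∈ Finset.range m, f n p.1 * p.2 ^ n) atTop (𝓝 (G p)))
    {z₀ : Fin N → ℂ} (hz₀ : z₀ ∈ U) {r ρr : ℝ≥0} (hr : 0 < r) (hrρ : r < ρr)
    (hρR : (ρr : ℝ≥0∞) < R) :
    ∃ ε > 0, Metric.ball z₀ ε ⊆ U ∧ ∃ M, 0 ≤ M ∧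
      ∀ n, ∀ z ∈ Metric.ball z₀ ε, ‖f n z‖ ≤ M / (r:ℝ) ^ n := by
  have hrR : (r : ℝ≥0∞) < R := lt_trans (by exact_mod_cast hrρ) hρR
  -- a closed ball inside U
  obtain ⟨s₀, hs₀, hs₀U⟩ := Metric.isOpen_iff.mp hUopen z₀ hz₀
  set s := s₀ / 2 with hs_def
  have hs : 0 < s := by positivity
  have hsU : Metric.closedBall z₀ s ⊆ U :=
    le_trans (Metric.closedBall_subset_ball (by rw [hs_def]; linarith)) hs₀U
  -- a point close to z₀ where g doesn't vanish
  obtain ⟨z₁, hz₁b, hz₁g⟩ :=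
    hartogsAux_identity hUopen hUconn hg hgne hz₀ (by positivity : (0:ℝ) < s/2)
  set v := z₁ - z₀ with hv_def
  have hvnorm : ‖v‖ < s / 2 := by
    rw [hv_def, ← dist_eq_norm]
    simpa [dist_comm] using hz₁b
  -- the sliced function h
  set h : ℂ → ℂ := fun ζ => g (z₀ + ζ • v) with hh_def
  have hmapsU : ∀ ζ : ℂ, ‖ζ‖ < 2 → z₀ + ζ • v ∈ U := by
    intro ζ hζ
    apply hsU
    rw [Metric.mem_closedBall, dist_eq_norm, add_sub_cancel_left, norm_smul]
    nlinarith [norm_nonneg ζ, norm_nonneg v]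
  have hhd : DifferentiableOn ℂ h (Metric.ball 0 2) := by
    apply hg.comp ((differentiable_id.smul_const v).const_add z₀).differentiableOn
    intro ζ hζ
    exact hmapsU ζ (by simpa [dist_eq_norm] using hζ)
  have hh1 : h 1 = g z₁ := by
    rw [hh_def]
    simp [hv_def]
  have hana0 : AnalyticAt ℂ h 0 :=
    (hhd.analyticOnNhd Metric.isOpen_ball) 0 (by simp)
  have hdicho := hana0.eventually_eq_zero_or_eventually_ne_zero
  have hne : ∀ᶠ ζ in 𝓝[≠] (0:ℂ), h ζ ≠ 0 := by
    rcases hdicho with hcase | hcase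
    · exfalso
      have hev : h =ᶠ[𝓝 (0:ℂ)] 0 := hcase
      have := ((hhd.analyticOnNhd Metric.isOpen_ball).eqOn_zero_of_preconnected_of_eventuallyEq_zero
        (convex_ball (0:ℂ) 2).isPreconnected (by simp : (0:ℂ) ∈ Metric.ball (0:ℂ) 2) hev)
        (by simp [Metric.mem_ball] : (1:ℂ) ∈ Metric.ball (0:ℂ) 2)
      rw [hh1] at this
      exact hz₁g this
    · exact hcase
  -- a circle radius where h doesn't vanish
  obtain ⟨ρ₁, hρ₁, hρ₁ne⟩ : ∃ ρ₁ > 0, ∀ ζ : ℂ, ζ ≠ 0 → ‖ζ‖ < ρ₁ → h ζ ≠ 0 := by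
    rw [eventually_nhdsWithin_iff, Metric.eventually_nhds_iff] at hne
    obtain ⟨ρ₁, hρ₁, H⟩ := hne
    exact ⟨ρ₁, hρ₁, fun ζ hζ hζ' => H (by simpa [dist_eq_norm] using hζ') hζ⟩
  set ρ := min (ρ₁ / 2) 1 with hρ_def
  have hρpos : 0 < ρ := by positivity
  have hρle1 : ρ ≤ 1 := min_le_right _ _
  have hρlt : ρ < ρ₁ := lt_of_le_of_lt (min_le_left _ _) (by linarith)
  have hcircU : ∀ ζ : ℂ, ‖ζ‖ ≤ ρ → z₀ + ζ • v ∈ U := by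
    intro ζ hζ
    exact hmapsU ζ (lt_of_le_of_lt hζ (by linarith))
  have hcircg : ∀ ζ : ℂ, ‖ζ‖ = ρ → g (z₀ + ζ • v) ≠ 0 := by
    intro ζ hζ
    apply hρ₁ne ζ (by intro hc; rw [hc] at hζ; simp at hζ; linarith) (by rw [hζ]; exact hρlt)
  -- the open set W
  set W := U ∩ {z | g z ≠ 0} with hW_def
  have hWopen : IsOpen W := by
    have : W = U ∩ g ⁻¹' ({0}ᶜ) := by
      ext z; simp [hW_def]
    rw [this]
    exact hg.continuousOn.isOpen_inter_preimage hUopen (isOpen_compl_singleton)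
  -- circle image compact inside W
  set Cc := (fun ζ : ℂ => z₀ + ζ • v) '' (Metric.sphere 0 ρ) with hCc_def
  have hCccomp : IsCompact Cc :=
    (isCompact_sphere 0 ρ).image (by continuity)
  have hCcW : Cc ⊆ W := by
    rintro _ ⟨ζ, hζ, rfl⟩
    have hζ' : ‖ζ‖ = ρ := by simpa using hζ
    exact ⟨hcircU ζ hζ'.le, hcircg ζ hζ'⟩
  obtain ⟨ε₀, hε₀, hthick⟩ := hCccomp.exists_thickening_subset_open hWopen hCcW
  set ε := min ε₀ (s / 2) with hε_def
  have hεpos : 0 < ε := lt_min hε₀ (by positivity)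
  -- membership facts
  have hmemU : ∀ z ∈ Metric.closedBall z₀ (ε/2), ∀ ζ : ℂ, ‖ζ‖ ≤ ρ → z + ζ • v ∈ U := by
    intro z hz ζ hζ
    apply hsU
    rw [Metric.mem_closedBall, dist_eq_norm]
    have h1 : z + ζ • v - z₀ = (z - z₀) + ζ • v := by ring_nf
    rw [h1]
    have h2 : ‖z - z₀‖ ≤ ε / 2 := by rwa [← dist_eq_norm, ← Metric.mem_closedBall]
    have h3 : ‖ζ • v‖ ≤ ‖v‖ := by
      rw [norm_smul]
      calc ‖ζ‖ * ‖v‖ ≤ 1 * ‖v‖ :=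
            mul_le_mul_of_nonneg_right (hζ.trans hρle1) (norm_nonneg _)
        _ = ‖v‖ := one_mul _
    calc ‖z - z₀ + ζ • v‖ ≤ ‖z - z₀‖ + ‖ζ • v‖ := norm_add_le _ _
      _ ≤ ε / 2 + ‖v‖ := add_le_add h2 h3
      _ ≤ s := by
          have : ε ≤ s / 2 := min_le_right _ _
          linarith
  have hmemW : ∀ z ∈ Metric.closedBall z₀ (ε/2), ∀ ζ : ℂ, ‖ζ‖ = ρ → z + ζ • v ∈ W := by
    intro z hz ζ hζ
    apply hthick
    rw [Metric.mem_thickening_iff]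
    refine ⟨z₀ + ζ • v, ⟨ζ, by simpa using hζ, rfl⟩, ?_⟩
    have : dist (z + ζ • v) (z₀ + ζ • v) = dist z z₀ := by
      simp [dist_eq_norm]
    rw [this]
    calc dist z z₀ ≤ ε / 2 := hz
      _ < ε := by linarith
      _ ≤ ε₀ := min_le_left _ _
  -- the compact tube
  set K := (fun q : (Fin N → ℂ) × ℂ => q.1 + q.2 • v) ''
    (Metric.closedBall z₀ (ε/2) ×ˢ Metric.sphere 0 ρ) with hK_def
  have hKcomp : IsCompact K :=
    ((isCompact_closedBall z₀ (ε/2)).prod (isCompact_sphere 0 ρ)).image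
      (continuous_fst.add (continuous_snd.smul continuous_const))
  have hKW : K ⊆ W := by
    rintro _ ⟨⟨z, ζ⟩, ⟨hz, hζ⟩, rfl⟩
    exact hmemW z hz ζ (by simpa using hζ)
  -- bound for G on the tube times circle
  have hsphere_disk : Metric.sphere (0:ℂ) (r:ℝ) ⊆ disk R := by
    intro w hw
    have hw' : ‖w‖ = (r:ℝ) := by simpa using hw
    have : ‖w‖₊ = r := by ext; simpa using hw'
    simpa [disk, this] using hrR
  have hKc : IsCompact (K ×ˢ Metric.sphere (0:ℂ) (r:ℝ)) :=
    hKcomp.prod (isCompact_sphere 0 (r:ℝ))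
  obtain ⟨M₀, hM₀⟩ := hKc.exists_bound_of_continuousOn
    (hGd.continuousOn.mono (Set.prod_mono hKW hsphere_disk))
  set M := max M₀ 0 with hM_def
  have hM0 : 0 ≤ M := le_max_right _ _
  -- Cauchy estimate on the tube
  have hcb : ∀ x ∈ K, ∀ n, ‖f n x‖ ≤ M / (r:ℝ) ^ n := by
    intro x hx
    have hxW : x ∈ W := hKW hx
    apply hartogsAux_coeff hr (by exact_mod_cast hrρ)
      (S := fun w => G (x, w))
    · -- differentiability of the slice
      apply hGd.comp ((differentiable_const x).prodMk differentiable_id).differentiableOn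
      intro w hw
      refine ⟨hxW, ?_⟩
      have hw' : ‖w‖ ≤ (r:ℝ) := by simpa using hw
      show (‖w‖₊ : ℝ≥0∞) < R
      refine lt_of_le_of_lt ?_ hrR
      exact_mod_cast hw'
    · intro w hw
      calc ‖G (x, w)‖ ≤ M₀ := hM₀ (x, w) ⟨hx, by simpa using hw⟩
        _ ≤ M := le_max_left _ _
    · intro w hw
      apply hGs (x, w)
      refine ⟨hxW, ?_⟩
      show (‖w‖₊ : ℝ≥0∞) < R
      refine lt_of_le_of_lt ?_ hρR
      exact_mod_cast hw
  -- maximum principle along slices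
  refine ⟨ε/2, by positivity, ?_, M, hM0, ?_⟩
  · intro z hz
    have := hmemU z (Metric.ball_subset_closedBall hz) 0 (by simp [hρpos.le])
    simpa using this
  intro n z hz
  have hzc : z ∈ Metric.closedBall z₀ (ε/2) := Metric.ball_subset_closedBall hz
  set φ : ℂ → ℂ := fun ζ => f n (z + ζ • v) with hφ_def
  have hφd : DifferentiableOn ℂ φ (Metric.closedBall 0 ρ) := by
    apply (hf n).comp ((differentiable_id.smul_const v).const_add z).differentiableOn
    intro ζ hζ
    exact hU (hmemU z hzc ζ (by simpa [dist_eq_norm] using hζ))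
  have hbound : ∀ ζ ∈ frontier (Metric.ball (0:ℂ) ρ), ‖φ ζ‖ ≤ M / (r:ℝ) ^ n := by
    rw [frontier_ball 0 hρpos.ne']
    intro ζ hζ
    have hζ' : ‖ζ‖ = ρ := by simpa using hζ
    have hmem : z + ζ • v ∈ K := ⟨(z, ζ), ⟨hzc, by simpa using hζ⟩, rfl⟩
    exact hcb _ hmem n
  have hcl : closure (Metric.ball (0:ℂ) ρ) ⊆ Metric.closedBall 0 ρ := closure_ball_subset_closedBall
  have hz0 : (0:ℂ) ∈ closure (Metric.ball (0:ℂ) ρ) := by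
    rw [closure_ball 0 hρpos.ne']; simp [hρpos.le]
  have hfin := Complex.norm_le_of_forall_mem_frontier_norm_le Metric.isBounded_ball
    (hφd.mono hcl).diffContOnCl hbound hz0
  simpa [hφ_def] using hfin

set_option maxHeartbeats 1000000 in
/-- **Removing a thin set.** If a Hartogs series converges and is holomorphic on
`(U \ E) × D₂`, where `E` is the zero set in `U` of a holomorphic function `g` on `U` that is
not identically zero, then it converges and is holomorphic on all of `U × D₂`. -/
theorem hartogs_series_extends_over_zero_set
    (N : ℕ) (hN : 1 ≤ N)
    (D₁ : Set (Fin N → ℂ)) (hD₁open : IsOpen D₁) (hD₁conn : IsConnected D₁)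
    (R : ℝ≥0∞) (hR : 0 < R)
    (f : ℕ → (Fin N → ℂ) → ℂ) (hf : ∀ n, DifferentiableOn ℂ (f n) D₁)
    (U : Set (Fin N → ℂ)) (hU : U ⊆ D₁) (hUopen : IsOpen U) (hUconn : IsConnected U)
    (g : (Fin N → ℂ) → ℂ) (hg : DifferentiableOn ℂ g U) (hgne : ∃ z ∈ U, g z ≠ 0)
    (hF : HolSumOn f ((U \ {z ∈ U | g z = 0}) ×ˢ disk R)) :
    HolSumOn f (U ×ˢ disk R) := by
  obtain ⟨G, hGd, hGs⟩ := hF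
  have hset : U \ {z ∈ U | g z = 0} = U ∩ {z | g z ≠ 0} := by
    ext z
    simp only [Set.mem_diff, Set.mem_setOf_eq, Set.mem_inter_iff, not_and]
    tauto
  rw [hset] at hGd hGs
  -- the candidate sum function
  set G' : (Fin N → ℂ) × ℂ → ℂ := fun p => ∑' n, f n p.1 * p.2 ^ n with hG'_def
  -- the key local statement
  have key : ∀ p₀ ∈ U ×ˢ disk R,
      Tendsto (fun m => ∑ n ∈ Finset.range m, f n p₀.1 * p₀.2 ^ n) atTop (𝓝 (G' p₀)) ∧
      DifferentiableAt ℂ G' p₀ := by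
    rintro ⟨z₀, w₀⟩ ⟨hz₀ : z₀ ∈ U, hw₀⟩
    have hw₀' : (‖w₀‖₊ : ℝ≥0∞) < R := hw₀
    -- choose radii  ‖w₀‖ < r < ρr,  ρr < R
    obtain ⟨ρr, hρ1, hρR⟩ := ENNReal.lt_iff_exists_nnreal_btwn.mp hw₀'
    obtain ⟨r, hr1, hr2⟩ := ENNReal.lt_iff_exists_nnreal_btwn.mp hρ1
    have hr1' : ‖w₀‖₊ < r := by exact_mod_cast hr1
    have hr2' : r < ρr := by exact_mod_cast hr2
    have hrpos : 0 < r := lt_of_le_of_lt zero_le hr1'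
    -- step A bound
    obtain ⟨ε, hε, hballU, M, hM0, hM⟩ :=
      hartogsAux_stepA hf hU hUopen hUconn.isPreconnected hg hgne hGd hGs hz₀ hrpos hr2' hρR
    -- real radii
    set rr : ℝ := (r : ℝ) with hrr_def
    have hrrpos : 0 < rr := hrpos
    have hw₀r : ‖w₀‖ < rr := hr1'
    obtain ⟨r1, hw₀r1, hr1rr⟩ : ∃ r1 : ℝ, ‖w₀‖ < r1 ∧ r1 < rr :=
      ⟨(‖w₀‖ + rr) / 2, by linarith, by linarith⟩
    obtain ⟨r2, hr1r2, hr2rr⟩ : ∃ r2 : ℝ, r1 < r2 ∧ r2 < rr :=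
      ⟨(r1 + rr) / 2, by linarith, by linarith⟩
    have hr1pos : 0 < r1 := lt_of_le_of_lt (norm_nonneg w₀) hw₀r1
    have hr2pos : 0 < r2 := hr1pos.trans hr1r2
    obtain ⟨δ, hδpos, hδ1, hδ2⟩ : ∃ δ : ℝ, 0 < δ ∧ δ ≤ ε / 2 ∧ δ ≤ r2 - r1 :=
      ⟨min (ε / 2) (r2 - r1), lt_min (by positivity) (by linarith), min_le_left _ _,
        min_le_right _ _⟩
    -- the neighborhood
    set t : Set ((Fin N → ℂ) × ℂ) := Metric.ball z₀ (ε/2) ×ˢ Metric.ball 0 r1 with ht_def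
    have htopen : IsOpen t := (Metric.isOpen_ball).prod Metric.isOpen_ball
    have hp₀t : (z₀, w₀) ∈ t :=
      ⟨Metric.mem_ball_self (by positivity), by simpa [Metric.mem_ball, dist_eq_norm] using hw₀r1⟩
    -- the series terms
    set h : ℕ → (Fin N → ℂ) × ℂ → ℂ := fun n p => f n p.1 * p.2 ^ n with hh_def
    -- bound on the bigger set
    set B : Set ((Fin N → ℂ) × ℂ) := Metric.ball z₀ ε ×ˢ Metric.ball 0 r2 with hB_def
    have hBopen : IsOpen B := (Metric.isOpen_ball).prod Metric.isOpen_ball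
    have hhb : ∀ n, ∀ p ∈ B, ‖h n p‖ ≤ M * (r2 / rr) ^ n := by
      rintro n ⟨z, w⟩ ⟨hzB, hwB⟩
      have hw2 : ‖w‖ ≤ r2 := by
        have : ‖w‖ < r2 := by simpa [Metric.mem_ball, dist_eq_norm] using hwB
        linarith
      have h1 : ‖h n (z, w)‖ = ‖f n z‖ * ‖w‖ ^ n := by
        simp [hh_def, norm_mul, norm_pow]
      rw [h1]
      calc ‖f n z‖ * ‖w‖ ^ n ≤ (M / rr ^ n) * r2 ^ n := by
            apply mul_le_mul (hM n z hzB) (pow_le_pow_left₀ (norm_nonneg _) hw2 n)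
              (by positivity) (by positivity)
        _ = M * (r2 / rr) ^ n := by
            rw [div_pow, div_mul_eq_mul_div, mul_div_assoc]
    -- differentiability of terms on B
    have hhd : ∀ n, DifferentiableOn ℂ (h n) B := by
      intro n
      apply DifferentiableOn.mul
      · apply ((hf n).comp (differentiable_fst.differentiableOn))
        rintro ⟨z, w⟩ ⟨hz, _⟩
        exact hU (hballU hz)
      · exact (differentiable_snd.pow n).differentiableOn
    -- derivative bound on t
    have hfderiv_bound : ∀ n, ∀ p ∈ t, ‖fderiv ℂ (h n) p‖ ≤ (2 * M / δ) * (r2 / rr) ^ n := by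
      rintro n ⟨z, w⟩ ⟨hz, hw⟩
      have hball_sub : Metric.ball ((z, w) : (Fin N → ℂ) × ℂ) δ ⊆ B := by
        rw [← ball_prod_same]
        apply Set.prod_mono
        · apply Metric.ball_subset_ball'
          have h1 : dist z z₀ < ε / 2 := hz
          linarith
        · apply Metric.ball_subset_ball'
          have h1 : dist w 0 < r1 := hw
          linarith
      have h2δ : Metric.ball ((z, w) : (Fin N → ℂ) × ℂ) (2 * (δ/2)) ⊆ B := by
        have : 2 * (δ/2) = δ := by ring
        rw [this]; exact hball_sub
      have := hartogsAux_fderiv (by positivity : (0:ℝ) < δ/2)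
        ((hhd n).mono h2δ) (fun y hy => hhb n y (h2δ hy))
      calc ‖fderiv ℂ (h n) (z, w)‖ ≤ M * (r2 / rr) ^ n / (δ/2) := this
        _ = (2 * M / δ) * (r2 / rr) ^ n := by
            rw [div_div_eq_mul_div, mul_comm (M * (r2 / rr) ^ n) 2, div_mul_eq_mul_div]
            ring_nf
    -- summability of the geometric bounds
    have hratio : 0 ≤ r2 / rr ∧ r2 / rr < 1 :=
      ⟨by positivity, by rw [div_lt_one hrrpos]; exact hr2rr⟩
    have hsum1 : Summable fun n : ℕ => (2 * M / δ) * (r2 / rr) ^ n :=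
      (summable_geometric_of_lt_one hratio.1 hratio.2).mul_left _
    have hsum2 : Summable fun n : ℕ => M * (r2 / rr) ^ n :=
      (summable_geometric_of_lt_one hratio.1 hratio.2).mul_left _
    -- pointwise convergence on t
    have htB : t ⊆ B := by
      apply Set.prod_mono
      · exact Metric.ball_subset_ball (by linarith)
      · exact Metric.ball_subset_ball (by linarith)
    have hconv : ∀ p ∈ t, Tendsto (fun m => ∑ n ∈ Finset.range m, h n p) atTop (𝓝 (G' p)) := by
      intro p hp
      have hs : Summable fun n => h n p :=
        Summable.of_norm (Summable.of_nonneg_of_le (fun n => norm_nonneg _)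
          (fun n => hhb n p (htB hp)) hsum2)
      exact hs.hasSum.tendsto_sum_nat
    -- partial sums have derivatives
    have hps : ∀ m : ℕ, ∀ p ∈ t,
        HasFDerivAt (fun q => ∑ n ∈ Finset.range m, h n q)
          (∑ n ∈ Finset.range m, fderiv ℂ (h n) p) p := by
      intro m p hp
      apply HasFDerivAt.fun_sum
      intro n _
      apply DifferentiableAt.hasFDerivAt
      exact ((hhd n) p (htB hp)).differentiableAt (hBopen.mem_nhds (htB hp))
    -- uniform convergence of derivatives
    have hTU : TendstoUniformlyOn
        (fun m p => ∑ n ∈ Finset.range m, fderiv ℂ (h n) p)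
        (fun p => ∑' n, fderiv ℂ (h n) p) atTop t :=
      tendstoUniformlyOn_tsum_nat hsum1 (fun n p hp => hfderiv_bound n p hp)
    -- conclude
    have hderiv := hasFDerivAt_of_tendstoUniformlyOn htopen hTU hps hconv hp₀t
    exact ⟨hconv _ hp₀t, hderiv.differentiableAt⟩
  exact ⟨G', fun p hp => ((key p hp).2).differentiableWithinAt, fun p hp => (key p hp).1⟩

end
end

section
/- Let F(z,w) = ∑_{n=0}^∞ fₙ(z)wⁿ be a Hartogs series on D = D₁ × D₂ satisfying condition (C1) and satisfying condition (C2) with a monic polynomial relation: Φ₀ ≡ 1 and t ≥ 2. Let Δ be a holomorphic function on D such that for every (z,w) ∈ D, Δ(z,w) = 0 if and only if the complex polynomial X ↦ ∑_{j=0}^t Φⱼ(z,w) X^{t−j} has a repeated complex root, and set T_Δ := {(z,w) ∈ D : Δ(z,w) = 0}. Assume D₁ is simply connected and assume there exist holomorphic functions f₁,…,f_m on D₁ such that T_Δ is the disjoint union over k = 1,…,m of the graphs {(z,w) ∈ D : w = f_k(z)}. Then F converges and is holomorphic on D. -/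
open Filter Topology
open scoped ENNReal

noncomputable section

open Metric
open scoped NNReal Real


lemma aux_summable_of_tendsto {a : ℕ → ℂ} {w' : ℂ} {s : ℝ} (hs : 0 ≤ s) (hlt : s < ‖w'‖)
    (hconv : ∃ l, Tendsto (fun m => ∑ n ∈ Finset.range m, a n * w' ^ n) atTop (𝓝 l)) :
    Summable (fun n => ‖a n‖ * s ^ n) := by
  obtain ⟨l, hl⟩ := hconv
  have hterm : Tendsto (fun n => a n * w' ^ n) atTop (𝓝 0) := by
    have h1 := (hl.comp (tendsto_add_atTop_nat 1)).sub hl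
    simp only [Function.comp] at h1
    have : (fun m => (∑ n ∈ Finset.range (m + 1), a n * w' ^ n) -
        ∑ n ∈ Finset.range m, a n * w' ^ n) = fun m => a m * w' ^ m := by
      funext m; rw [Finset.sum_range_succ]; ring
    rw [this, sub_self] at h1
    exact h1
  have hbdd : ∃ C, ∀ n, ‖a n * w' ^ n‖ ≤ C := by
    have := hterm.norm.bddAbove_range
    obtain ⟨C, hC⟩ := this
    exact ⟨C, fun n => hC ⟨n, rfl⟩⟩
  obtain ⟨C, hC⟩ := hbdd
  have hw' : 0 < ‖w'‖ := lt_of_le_of_lt hs hlt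
  have hq0 : 0 ≤ s / ‖w'‖ := div_nonneg hs hw'.le
  have hq1 : s / ‖w'‖ < 1 := (div_lt_one hw').mpr hlt
  apply Summable.of_nonneg_of_le (fun n => by positivity)
    (fun n => ?_) ((summable_geometric_of_lt_one hq0 hq1).mul_left C)
  have : ‖a n‖ * s ^ n = ‖a n * w' ^ n‖ * (s / ‖w'‖) ^ n := by
    rw [norm_mul, norm_pow, mul_assoc, ← mul_pow]
    rw [mul_div_cancel₀ _ (ne_of_gt hw')]
  rw [this]
  exact mul_le_mul_of_nonneg_right (hC n) (by positivity)

lemma aux_root_bound {t : ℕ} (ht : 1 ≤ t) (c : ℕ → ℂ) (x : ℂ)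
    (hrel : x ^ t + ∑ j ∈ Finset.range t, c j * x ^ (t - (j + 1)) = 0) :
    ‖x‖ ≤ 1 + ∑ j ∈ Finset.range t, ‖c j‖ := by
  by_contra hcon
  push_neg at hcon
  set B := ∑ j ∈ Finset.range t, ‖c j‖ with hB
  have hB0 : 0 ≤ B := Finset.sum_nonneg fun _ _ => norm_nonneg _
  have hx1 : 1 ≤ ‖x‖ := le_of_lt (lt_of_le_of_lt (le_add_of_nonneg_right hB0) hcon)
  have hxt : ‖x‖ ^ t ≤ B * ‖x‖ ^ (t - 1) := by
    have hx : x ^ t = -(∑ j ∈ Finset.range t, c j * x ^ (t - (j + 1))) := by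
      linear_combination hrel
    calc ‖x‖ ^ t = ‖x ^ t‖ := (norm_pow x t).symm
      _ = ‖∑ j ∈ Finset.range t, c j * x ^ (t - (j + 1))‖ := by rw [hx, norm_neg]
      _ ≤ ∑ j ∈ Finset.range t, ‖c j * x ^ (t - (j + 1))‖ := norm_sum_le _ _
      _ ≤ ∑ j ∈ Finset.range t, ‖c j‖ * ‖x‖ ^ (t - 1) := by
          apply Finset.sum_le_sum
          intro j hj
          rw [norm_mul, norm_pow]
          exact mul_le_mul_of_nonneg_left
            (pow_le_pow_right₀ hx1 (by omega)) (norm_nonneg _)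
      _ = B * ‖x‖ ^ (t - 1) := by rw [← Finset.sum_mul]
  have hxx : ‖x‖ ^ t = ‖x‖ * ‖x‖ ^ (t - 1) := by
    rw [← pow_succ']
    congr 1
    omega
  rw [hxx] at hxt
  have hpos : 0 < ‖x‖ ^ (t - 1) := pow_pos (lt_of_lt_of_le one_pos hx1) _
  have := le_of_mul_le_mul_right hxt hpos
  linarith

/-- absolute summability of a power series at a point -/
def auxSAt (φ : PowerSeries ℂ) (w : ℂ) : Prop :=
  Summable fun n => ‖(PowerSeries.coeff n φ) * w ^ n‖

/-- value of a power series at a point -/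
noncomputable def auxV (φ : PowerSeries ℂ) (w : ℂ) : ℂ := ∑' n, (PowerSeries.coeff n φ) * w ^ n

lemma auxSAt.hasSum {φ : PowerSeries ℂ} {w : ℂ} (h : auxSAt φ w) :
    HasSum (fun n => (PowerSeries.coeff n φ) * w ^ n) (auxV φ w) :=
  (Summable.of_norm h).hasSum

lemma aux_coeff_mul_pow (φ ψ : PowerSeries ℂ) (w : ℂ) (n : ℕ) :
    (PowerSeries.coeff n (φ * ψ)) * w ^ n =
      ∑ kl ∈ Finset.HasAntidiagonal.antidiagonal n,
        ((PowerSeries.coeff kl.1 φ) * w ^ kl.1) * ((PowerSeries.coeff kl.2 ψ) * w ^ kl.2) := by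
  rw [PowerSeries.coeff_mul, Finset.sum_mul]
  apply Finset.sum_congr rfl
  intro kl hkl
  have : kl.1 + kl.2 = n := Finset.HasAntidiagonal.mem_antidiagonal.mp hkl
  rw [← this, pow_add]
  ring

lemma auxSAt.mul {φ ψ : PowerSeries ℂ} {w : ℂ} (hφ : auxSAt φ w) (hψ : auxSAt ψ w) :
    auxSAt (φ * ψ) w := by
  have := summable_norm_sum_mul_antidiagonal_of_summable_norm hφ hψ
  unfold auxSAt
  convert this using 2 with n
  rw [aux_coeff_mul_pow]

lemma auxV_mul {φ ψ : PowerSeries ℂ} {w : ℂ} (hφ : auxSAt φ w) (hψ : auxSAt ψ w) :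
    auxV (φ * ψ) w = auxV φ w * auxV ψ w := by
  unfold auxV
  rw [tsum_mul_tsum_eq_tsum_sum_antidiagonal_of_summable_norm hφ hψ]
  apply tsum_congr
  intro n
  rw [aux_coeff_mul_pow]

lemma auxSAt.one (w : ℂ) : auxSAt 1 w := by
  apply summable_of_ne_finset_zero (s := {0})
  intro n hn
  simp only [Finset.mem_singleton] at hn
  simp [PowerSeries.coeff_one, hn]

lemma auxV_one (w : ℂ) : auxV 1 w = 1 := by
  unfold auxV
  rw [tsum_eq_single 0]
  · simp
  · intro n hn; simp [PowerSeries.coeff_one, hn]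

lemma auxSAt.pow {φ : PowerSeries ℂ} {w : ℂ} (hφ : auxSAt φ w) (k : ℕ) :
    auxSAt (φ ^ k) w := by
  induction k with
  | zero => simpa using auxSAt.one w
  | succ k ih => rw [pow_succ]; exact ih.mul hφ

lemma auxV_pow {φ : PowerSeries ℂ} {w : ℂ} (hφ : auxSAt φ w) (k : ℕ) :
    auxV (φ ^ k) w = (auxV φ w) ^ k := by
  induction k with
  | zero => simpa using auxV_one w
  | succ k ih => rw [pow_succ, auxV_mul (hφ.pow k) hφ, ih, pow_succ]

lemma auxSAt.sum {ι : Type*} (s : Finset ι) (F : ι → PowerSeries ℂ) (w : ℂ)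
    (h : ∀ i ∈ s, auxSAt (F i) w) : auxSAt (∑ i ∈ s, F i) w := by
  classical
  induction s using Finset.induction_on with
  | empty =>
    simp only [Finset.sum_empty]
    unfold auxSAt
    simpa using summable_zero
  | insert a s' hx ih =>
    rw [Finset.sum_insert hx]
    have h1 : auxSAt (F a) w := h a (Finset.mem_insert_self a s')
    have h2 : auxSAt (∑ i ∈ s', F i) w := ih fun i hi => h i (Finset.mem_insert_of_mem hi)
    unfold auxSAt at h1 h2 ⊢
    apply Summable.of_nonneg_of_le (fun n => norm_nonneg _) (fun n => ?_) (h1.add h2)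
    simp only [map_add, add_mul]
    exact norm_add_le _ _

lemma auxV_sum {ι : Type*} (s : Finset ι) (F : ι → PowerSeries ℂ) (w : ℂ)
    (h : ∀ i ∈ s, auxSAt (F i) w) : auxV (∑ i ∈ s, F i) w = ∑ i ∈ s, auxV (F i) w := by
  classical
  induction s using Finset.induction_on with
  | empty => simp [auxV]
  | insert a s' hx ih =>
    have h1 : auxSAt (F a) w := h a (Finset.mem_insert_self a s')
    have h2 : auxSAt (∑ i ∈ s', F i) w := auxSAt.sum s' F w
      fun i hi => h i (Finset.mem_insert_of_mem hi)
    rw [Finset.sum_insert hx, Finset.sum_insert hx,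
      ← ih fun i hi => h i (Finset.mem_insert_of_mem hi)]
    unfold auxV
    rw [← Summable.tsum_add (Summable.of_norm h1) (Summable.of_norm h2)]
    apply tsum_congr; intro n; simp only [map_add]; ring

lemma auxV_zero (w : ℂ) : auxV 0 w = 0 := by
  unfold auxV; simp

lemma aux_cauchy_bound {a : ℕ → ℂ} {r r₂ M : ℝ} (hr : 0 < r) (hrr : r < r₂)
    (hsum : ∀ w : ℂ, ‖w‖ ≤ r₂ → Summable (fun n => ‖a n * w ^ n‖))
    (hb : ∀ w : ℂ, ‖w‖ ≤ r → ‖∑' n, a n * w ^ n‖ ≤ M) :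
    ∀ n, ‖a n‖ * r ^ n ≤ M := by
  set q : FormalMultilinearSeries ℂ ℂ ℂ :=
    fun n => ContinuousMultilinearMap.mkPiRing ℂ (Fin n) (a n) with hqdef
  have hqnorm : ∀ n, ‖q n‖ = ‖a n‖ := fun n => ContinuousMultilinearMap.norm_mkPiRing _
  have hr₂0 : 0 < r₂ := hr.trans hrr
  have hrad : (r₂.toNNReal : ℝ≥0∞) ≤ q.radius := by
    apply q.le_radius_of_summable
    have := hsum (r₂ : ℂ) (by simp [Complex.norm_real, abs_of_pos hr₂0])
    apply Summable.congr this
    intro n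
    rw [norm_mul, norm_pow, hqnorm, Complex.norm_real, Real.norm_eq_abs, abs_of_pos hr₂0,
      Real.coe_toNNReal _ hr₂0.le]
  have hradpos : 0 < q.radius :=
    lt_of_lt_of_le (by simpa using ENNReal.coe_pos.mpr (Real.toNNReal_pos.mpr hr₂0)) hrad
  have hq : HasFPowerSeriesOnBall q.sum q 0 q.radius := q.hasFPowerSeriesOnBall hradpos
  have hqsum : ∀ w : ℂ, q.sum w = ∑' n, a n * w ^ n := by
    intro w
    unfold FormalMultilinearSeries.sum
    apply tsum_congr
    intro n
    simp [hqdef, ContinuousMultilinearMap.mkPiRing_apply, smul_eq_mul, mul_comm]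
  have hmem : ∀ x : ℂ, ‖x‖ ≤ r → x ∈ Metric.eball (0 : ℂ) q.radius := by
    intro x hx
    rw [Metric.mem_eball, edist_zero_right]
    calc (‖x‖₊ : ℝ≥0∞) < r₂.toNNReal := by
          rw [ENNReal.coe_lt_coe, ← NNReal.coe_lt_coe, coe_nnnorm,
            Real.coe_toNNReal _ hr₂0.le]
          exact lt_of_le_of_lt hx hrr
      _ ≤ q.radius := hrad
  have hdiff : DifferentiableOn ℂ q.sum (Metric.closedBall (0 : ℂ) r.toNNReal) := by
    apply hq.differentiableOn.mono
    intro x hx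
    rw [Metric.mem_closedBall, dist_zero_right, Real.coe_toNNReal _ hr.le] at hx
    exact hmem x hx
  have hc : HasFPowerSeriesOnBall q.sum (cauchyPowerSeries q.sum 0 r.toNNReal) 0 r.toNNReal :=
    hdiff.hasFPowerSeriesOnBall (Real.toNNReal_pos.mpr hr)
  have heq : q = cauchyPowerSeries q.sum 0 r.toNNReal :=
    hq.hasFPowerSeriesAt.eq_formalMultilinearSeries hc.hasFPowerSeriesAt
  -- continuity of the sum on the circle
  have hcont : Continuous fun θ : ℝ => q.sum (circleMap 0 r θ) := by
    apply hq.continuousOn.comp_continuous (continuous_circleMap 0 r)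
    intro θ
    exact hmem _ (by rw [norm_circleMap_zero, abs_of_pos hr])
  have hM0 : 0 ≤ M := le_trans (norm_nonneg _) (hb 0 (by simp [hr.le]))
  intro n
  have hbound := norm_cauchyPowerSeries_le q.sum 0 (r.toNNReal : ℝ) n
  rw [← heq] at hbound
  have hint : (∫ θ : ℝ in (0)..(2 * π), ‖q.sum (circleMap 0 (r.toNNReal : ℝ) θ)‖) ≤ 2 * π * M := by
    have h2pi : (0:ℝ) ≤ 2 * π := by positivity
    calc (∫ θ : ℝ in (0)..(2 * π), ‖q.sum (circleMap 0 (r.toNNReal : ℝ) θ)‖)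
        ≤ ∫ _ : ℝ in (0)..(2 * π), M := by
          apply intervalIntegral.integral_mono_on h2pi _ (intervalIntegrable_const)
          · intro θ _
            rw [Real.coe_toNNReal _ hr.le, hqsum]
            exact hb _ (by rw [norm_circleMap_zero, abs_of_pos hr])
          · rw [Real.coe_toNNReal _ hr.le]
            exact (hcont.norm).intervalIntegrable 0 (2 * π)
      _ = 2 * π * M := by simp [mul_comm]
  have hfinal : ‖q n‖ ≤ ((2 * π)⁻¹ * (2 * π * M)) * |(r.toNNReal : ℝ)|⁻¹ ^ n := by
    refine hbound.trans ?_
    apply mul_le_mul_of_nonneg_right _ (by positivity)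
    apply mul_le_mul_of_nonneg_left hint (by positivity)
  rw [hqnorm] at hfinal
  have h2π : (2 * π)⁻¹ * (2 * π * M) = M := by
    field_simp
  rw [h2π, Real.coe_toNNReal _ hr.le, abs_of_pos hr] at hfinal
  calc ‖a n‖ * r ^ n ≤ (M * r⁻¹ ^ n) * r ^ n := by
        apply mul_le_mul_of_nonneg_right hfinal (by positivity)
    _ = M := by
        rw [mul_assoc, ← mul_pow, inv_mul_cancel₀ hr.ne', one_pow, mul_one]

/-- Cauchy estimate for the derivative at the center of a disk. -/
lemma aux_deriv_bound {g : ℂ → ℂ} {ρ M : ℝ} (hρ : 0 < ρ)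
    (hd : DifferentiableOn ℂ g (Metric.closedBall 0 ρ))
    (hbd : ∀ u ∈ Metric.closedBall (0 : ℂ) ρ, ‖g u‖ ≤ M) :
    ‖deriv g 0‖ ≤ M / ρ := by
  have hρ' : (0 : ℝ≥0) < ρ.toNNReal := Real.toNNReal_pos.mpr hρ
  have hdc : DifferentiableOn ℂ g (Metric.closedBall 0 (ρ.toNNReal : ℝ)) := by
    rwa [Real.coe_toNNReal _ hρ.le]
  have hc : HasFPowerSeriesOnBall g (cauchyPowerSeries g 0 ρ.toNNReal) 0 ρ.toNNReal :=
    hdc.hasFPowerSeriesOnBall hρ'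
  have hderiv : deriv g 0 = cauchyPowerSeries g 0 ρ.toNNReal 1 fun _ => 1 :=
    hc.hasFPowerSeriesAt.deriv
  have hM0 : 0 ≤ M := le_trans (norm_nonneg _) (hbd 0 (by simp [hρ.le]))
  have happ : ‖cauchyPowerSeries g 0 ρ.toNNReal 1 fun _ => (1:ℂ)‖ ≤
      ‖cauchyPowerSeries g 0 ρ.toNNReal 1‖ := by
    have := (cauchyPowerSeries g 0 ρ.toNNReal 1).le_opNorm fun _ => (1:ℂ)
    simpa using this
  have hcont : Continuous fun θ : ℝ => g (circleMap 0 ρ θ) := by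
    apply hd.continuousOn.comp_continuous (continuous_circleMap 0 ρ)
    intro θ
    simp only [Metric.mem_closedBall, dist_zero_right, norm_circleMap_zero]
    rw [abs_of_pos hρ]
  have hint : (∫ θ : ℝ in (0)..(2 * π), ‖g (circleMap 0 (ρ.toNNReal : ℝ) θ)‖) ≤ 2 * π * M := by
    have h2pi : (0:ℝ) ≤ 2 * π := by positivity
    calc (∫ θ : ℝ in (0)..(2 * π), ‖g (circleMap 0 (ρ.toNNReal : ℝ) θ)‖)
        ≤ ∫ _ : ℝ in (0)..(2 * π), M := by
          apply intervalIntegral.integral_mono_on h2pi _ intervalIntegrable_const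
          · intro θ _
            rw [Real.coe_toNNReal _ hρ.le]
            apply hbd
            simp only [Metric.mem_closedBall, dist_zero_right,
              norm_circleMap_zero]
            rw [abs_of_pos hρ]
          · rw [Real.coe_toNNReal _ hρ.le]
            exact hcont.norm.intervalIntegrable 0 (2 * π)
      _ = 2 * π * M := by simp [mul_comm]
  have hbound := norm_cauchyPowerSeries_le g 0 (ρ.toNNReal : ℝ) 1
  have hfin : ‖cauchyPowerSeries g 0 ρ.toNNReal 1‖ ≤ ((2 * π)⁻¹ * (2 * π * M)) * |(ρ.toNNReal : ℝ)|⁻¹ ^ 1 := by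
    refine hbound.trans ?_
    apply mul_le_mul_of_nonneg_right _ (by positivity)
    apply mul_le_mul_of_nonneg_left hint (by positivity)
  have h2π : (2 * π)⁻¹ * (2 * π * M) = M := by field_simp
  rw [h2π, Real.coe_toNNReal _ hρ.le, abs_of_pos hρ, pow_one] at hfin
  rw [Real.coe_toNNReal _ hρ.le] at hderiv happ
  rw [hderiv]
  calc ‖cauchyPowerSeries g 0 ρ 1 fun _ => (1:ℂ)‖
      ≤ ‖cauchyPowerSeries g 0 ρ 1‖ := happ
    _ ≤ M * ρ⁻¹ := hfin
    _ = M / ρ := by rw [div_eq_mul_inv]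

/-- Cauchy estimate for the Fréchet derivative of a bounded holomorphic function on a ball,
valid on the quarter ball. -/
lemma aux_fderiv_bound {X : Type*} [NormedAddCommGroup X] [NormedSpace ℂ X]
    {h : X → ℂ} {p : X} {ε B : ℝ} (hε : 0 < ε)
    (hd : DifferentiableOn ℂ h (Metric.ball p ε))
    (hB : ∀ y ∈ Metric.ball p ε, ‖h y‖ ≤ B) :
    ∀ x ∈ Metric.ball p (ε / 4), ‖fderiv ℂ h x‖ ≤ 2 * B / ε := by
  intro x hx
  have hB0 : 0 ≤ B := le_trans (norm_nonneg _) (hB p (by simp [hε]))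
  have hxmem : x ∈ Metric.ball p ε := by
    rw [Metric.mem_ball] at hx ⊢
    linarith
  have hdx : DifferentiableAt ℂ h x := hd.differentiableAt (isOpen_ball.mem_nhds hxmem)
  apply ContinuousLinearMap.opNorm_le_bound _ (by positivity)
  intro v
  rcases eq_or_ne v 0 with rfl | hv
  · simp
  have hv0 : 0 < ‖v‖ := norm_pos_iff.mpr hv
  set ρ : ℝ := ε / (2 * ‖v‖) with hρdef
  have hρ : 0 < ρ := by positivity
  set g : ℂ → ℂ := fun u => h (x + u • v) with hgdef
  have hmaps : ∀ u : ℂ, u ∈ Metric.closedBall (0:ℂ) ρ → x + u • v ∈ Metric.ball p ε := by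
    intro u hu
    rw [Metric.mem_closedBall, dist_zero_right] at hu
    have h1 : ‖u • v‖ ≤ ε / 2 := by
      rw [norm_smul]
      calc ‖u‖ * ‖v‖ ≤ ρ * ‖v‖ := mul_le_mul_of_nonneg_right hu (norm_nonneg _)
        _ = ε / 2 := by rw [hρdef]; field_simp
    have h2 : dist x p < ε / 4 := Metric.mem_ball.mp hx
    rw [Metric.mem_ball]
    calc dist (x + u • v) p ≤ dist (x + u • v) x + dist x p := dist_triangle _ _ _
      _ = ‖u • v‖ + dist x p := by rw [dist_self_add_left]
      _ < ε := by linarith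
  have haff : Differentiable ℂ fun u : ℂ => x + u • v :=
    (differentiable_id.smul_const v).const_add x
  have hdg : DifferentiableOn ℂ g (Metric.closedBall 0 ρ) :=
    hd.comp haff.differentiableOn fun u hu => hmaps u hu
  have hbg : ∀ u ∈ Metric.closedBall (0:ℂ) ρ, ‖g u‖ ≤ B := fun u hu => hB _ (hmaps u hu)
  have hder := aux_deriv_bound hρ hdg hbg
  have hc : HasDerivAt (fun u : ℂ => x + u • v) v 0 := by
    simpa using ((hasDerivAt_id (0:ℂ)).smul_const v).const_add x
  have hc0 : HasFDerivAt h (fderiv ℂ h x) (x + (0:ℂ) • v) := by simpa using hdx.hasFDerivAt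
  have hgd : HasDerivAt g ((fderiv ℂ h x) v) 0 := hc0.comp_hasDerivAt 0 hc
  have : ‖(fderiv ℂ h x) v‖ ≤ B / ρ := by rw [← hgd.deriv]; exact hder
  refine this.trans (le_of_eq ?_)
  rw [hρdef]
  field_simp

/-- Uniformly Cauchy sequences of holomorphic functions have uniformly Cauchy derivatives
on a smaller ball. -/
lemma aux_fderiv_cauchy {X : Type*} [NormedAddCommGroup X] [NormedSpace ℂ X]
    {F : ℕ → X → ℂ} {p : X} {ε : ℝ} (hε : 0 < ε)
    (hd : ∀ m, DifferentiableOn ℂ (F m) (Metric.ball p ε))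
    (huc : UniformCauchySeqOn F atTop (Metric.ball p ε)) :
    UniformCauchySeqOn (fun m => fderiv ℂ (F m)) atTop (Metric.ball p (ε / 4)) := by
  rw [Metric.uniformCauchySeqOn_iff] at huc ⊢
  intro η hη
  obtain ⟨N, hN⟩ := huc (η * ε / 4) (by positivity)
  refine ⟨N, fun m hm k hk x hx => ?_⟩
  have hdm : DifferentiableOn ℂ (fun y => F m y - F k y) (Metric.ball p ε) :=
    (hd m).sub (hd k)
  have hbm : ∀ y ∈ Metric.ball p ε, ‖F m y - F k y‖ ≤ η * ε / 4 := by
    intro y hy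
    have := hN m hm k hk y hy
    rw [dist_eq_norm] at this
    exact this.le
  have hfb := aux_fderiv_bound hε hdm hbm x hx
  have hxmem : x ∈ Metric.ball p ε := by
    rw [Metric.mem_ball] at hx ⊢; linarith
  have hdiffm : DifferentiableAt ℂ (F m) x := (hd m).differentiableAt (isOpen_ball.mem_nhds hxmem)
  have hdiffk : DifferentiableAt ℂ (F k) x := (hd k).differentiableAt (isOpen_ball.mem_nhds hxmem)
  have hsub : fderiv ℂ (fun y => F m y - F k y) x = fderiv ℂ (F m) x - fderiv ℂ (F k) x :=
    fderiv_sub hdiffm hdiffk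
  rw [dist_eq_norm, ← hsub]
  calc ‖fderiv ℂ (fun y => F m y - F k y) x‖ ≤ 2 * (η * ε / 4) / ε := hfb
    _ = η / 2 := by field_simp; ring
    _ < η := by linarith

/-- A locally uniform limit of holomorphic functions on an open subset of a complex normed
space is holomorphic. -/
lemma aux_diff_limit {X : Type*} [NormedAddCommGroup X] [NormedSpace ℂ X]
    {F : ℕ → X → ℂ} {G : X → ℂ} {s : Set X} (hs : IsOpen s)
    (hd : ∀ m, DifferentiableOn ℂ (F m) s)
    (hloc : ∀ p ∈ s, ∃ ε > 0, Metric.ball p ε ⊆ s ∧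
      TendstoUniformlyOn F G atTop (Metric.ball p ε)) :
    DifferentiableOn ℂ G s := by
  intro x hx
  obtain ⟨ε, hε, hsub, hunif⟩ := hloc x hx
  have hdm : ∀ m, DifferentiableOn ℂ (F m) (Metric.ball x ε) := fun m => (hd m).mono hsub
  have hucd := aux_fderiv_cauchy hε hdm hunif.uniformCauchySeqOn
  have hcs : ∀ y ∈ Metric.ball x (ε / 4), CauchySeq fun m => fderiv ℂ (F m) y := by
    intro y hy
    rw [Metric.cauchySeq_iff]
    rw [Metric.uniformCauchySeqOn_iff] at hucd
    intro η hη
    obtain ⟨N, hN⟩ := hucd η hη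
    exact ⟨N, fun m hm k hk => hN m hm k hk y hy⟩
  set g' : X → (X →L[ℂ] ℂ) := fun y => limUnder atTop (fun m => fderiv ℂ (F m) y) with hg'
  have hg'tend : ∀ y ∈ Metric.ball x (ε / 4),
      Tendsto (fun m => fderiv ℂ (F m) y) atTop (𝓝 (g' y)) := by
    intro y hy
    obtain ⟨L, hL⟩ := cauchySeq_tendsto_of_complete (hcs y hy)
    have heq : g' y = L := hL.limUnder_eq
    show Tendsto (fun m => fderiv ℂ (F m) y) atTop (𝓝 (g' y))
    rw [heq]
    exact hL
  have hunifd : TendstoUniformlyOn (fun m => fderiv ℂ (F m)) g' atTop (Metric.ball x (ε / 4)) :=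
    hucd.tendstoUniformlyOn_of_tendsto hg'tend
  have hxball : x ∈ Metric.ball x (ε / 4) := Metric.mem_ball_self (by linarith)
  have hsmall : Metric.ball x (ε / 4) ⊆ Metric.ball x ε :=
    Metric.ball_subset_ball (by linarith)
  have hmain : HasFDerivAt G (g' x) x := by
    apply hasFDerivAt_of_tendstoUniformlyOn isOpen_ball hunifd
      (fun m y hy => ((hdm m).differentiableAt
        (isOpen_ball.mem_nhds (hsmall hy))).hasFDerivAt)
      (fun y hy => hunif.tendsto_at (hsmall hy)) hxball
  exact hmain.differentiableAt.differentiableWithinAt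

lemma auxSAt_mk {c : ℕ → ℂ} {w : ℂ} (h : Summable fun n => ‖c n * w ^ n‖) :
    auxSAt (PowerSeries.mk c) w := by
  unfold auxSAt
  simpa [PowerSeries.coeff_mk] using h

lemma auxV_mk (c : ℕ → ℂ) (w : ℂ) : auxV (PowerSeries.mk c) w = ∑' n, c n * w ^ n := by
  unfold auxV
  simp [PowerSeries.coeff_mk]



/-- **Step 3 lemma.** Suppose `F` satisfies (C1) and a monic algebraic relation (`Φ₀ ≡ 1`,
`t ≥ 2`). Let `Δ` be a holomorphic function on `D` vanishing exactly where the polynomial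
`∑ Φⱼ(z,w) X^{t-j}` has a repeated complex root, with zero set `T_Δ`. If `D₁` is simply
connected and `T_Δ` is a disjoint union of graphs of holomorphic functions `f₁, …, f_m` on
`D₁`, then `F` converges and is holomorphic on `D`. -/
theorem hartogs_series_holomorphic_of_graph_discriminant
    (N : ℕ) (hN : 1 ≤ N)
    (D₁ : Set (Fin N → ℂ)) (hD₁open : IsOpen D₁) (hD₁conn : IsConnected D₁)
    (R : ℝ≥0∞) (hR : 0 < R)
    (f : ℕ → (Fin N → ℂ) → ℂ) (hf : ∀ n, DifferentiableOn ℂ (f n) D₁)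
    (hC1 : CondC1 f D₁ R)
    -- condition (C2) with a monic relation: `Φ₀ ≡ 1` and `t ≥ 2`:
    (t : ℕ) (ht : 2 ≤ t)
    (Φ : ℕ → (Fin N → ℂ) × ℂ → ℂ) (g : ℕ → ℕ → (Fin N → ℂ) → ℂ)
    (hΦ : ∀ j, j ≤ t → DifferentiableOn ℂ (Φ j) (D₁ ×ˢ disk R))
    (hg : ∀ j n, j ≤ t → DifferentiableOn ℂ (g j n) D₁)
    (hexp : ∀ j, j ≤ t → ∀ p ∈ D₁ ×ˢ disk R,
      Tendsto (fun m => ∑ n ∈ Finset.range m, g j n p.1 * p.2 ^ n) atTop (𝓝 (Φ j p)))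
    (hΦ0 : ∀ p ∈ D₁ ×ˢ disk R, Φ 0 p = 1)
    (hg00 : ∀ z ∈ D₁, g 0 0 z = 1)
    (hg0n : ∀ n, 1 ≤ n → ∀ z ∈ D₁, g 0 n z = 0)
    (hrel : FormalAlgRel f g t D₁)
    -- `Δ` vanishes exactly where the polynomial has a repeated complex root:
    (Δ : (Fin N → ℂ) × ℂ → ℂ) (hΔ : DifferentiableOn ℂ Δ (D₁ ×ˢ disk R))
    (hΔzero : ∀ p ∈ D₁ ×ˢ disk R, (Δ p = 0 ↔ ∃ x : ℂ, (Polynomial.X - Polynomial.C x) ^ 2 ∣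
      ∑ j ∈ Finset.range (t + 1), Polynomial.C (Φ j p) * Polynomial.X ^ (t - j)))
    -- `D₁` is simply connected:
    (hsc : SimplyConnectedSpace ↥D₁)
    -- `T_Δ` is a disjoint union of graphs of holomorphic functions on `D₁`:
    (m : ℕ) (fk : Fin m → (Fin N → ℂ) → ℂ)
    (hfk : ∀ k, DifferentiableOn ℂ (fk k) D₁)
    (hTΔ : {p ∈ D₁ ×ˢ disk R | Δ p = 0} =
      ⋃ k : Fin m, {p ∈ D₁ ×ˢ disk R | p.2 = fk k p.1})
    (hdisj : ∀ k l : Fin m, k ≠ l →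
      {p ∈ D₁ ×ˢ disk R | p.2 = fk k p.1} ∩ {p ∈ D₁ ×ˢ disk R | p.2 = fk l p.1} = ∅) :
    HolSumOn f (D₁ ×ˢ disk R) := by
  classical
  obtain ⟨S, hSD, hdense, hSconv⟩ := hC1
  have hdiskopen : IsOpen (disk R) :=
    (ENNReal.continuous_coe.comp continuous_nnnorm).isOpen_preimage (Set.Iio R) isOpen_Iio
  have hDopen : IsOpen (D₁ ×ˢ disk R) := hD₁open.prod hdiskopen
  have hmemdisk : ∀ {w : ℂ} {r : ℝ≥0}, ‖w‖ ≤ (r : ℝ) → (r : ℝ≥0∞) < R → w ∈ disk R := by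
    intro w r h1 h2
    have h3 : (‖w‖₊ : ℝ≥0∞) ≤ (r : ℝ≥0∞) := by
      rw [ENNReal.coe_le_coe, ← NNReal.coe_le_coe, coe_nnnorm]
      exact h1
    exact lt_of_le_of_lt h3 h2
  -- absolute summability of the Hartogs series at points of `S`
  have habs_f : ∀ α ∈ S, ∀ w ∈ disk R, Summable fun n => ‖f n α * w ^ n‖ := by
    intro α hα w hw
    obtain ⟨ρ, hρ1, hρ2⟩ := ENNReal.lt_iff_exists_nnreal_btwn.mp hw
    have hρmem : ((ρ : ℝ) : ℂ) ∈ disk R :=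
      hmemdisk (by rw [Complex.norm_real, Real.norm_eq_abs, abs_of_nonneg ρ.coe_nonneg]) hρ2
    have h1 : ‖w‖ < ‖((ρ : ℝ) : ℂ)‖ := by
      rw [Complex.norm_real, Real.norm_eq_abs, abs_of_nonneg ρ.coe_nonneg]
      have : ‖w‖₊ < ρ := by exact_mod_cast hρ1
      exact_mod_cast this
    have := aux_summable_of_tendsto (norm_nonneg w) h1 (hSconv α hα _ hρmem)
    exact this.congr fun n => by simp [norm_mul, norm_pow]
  -- absolute summability of the coefficient series at all points of `D₁`
  have habs_g : ∀ j, j ≤ t → ∀ z ∈ D₁, ∀ w ∈ disk R,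
      Summable fun n => ‖g j n z * w ^ n‖ := by
    intro j hj z hz w hw
    obtain ⟨ρ, hρ1, hρ2⟩ := ENNReal.lt_iff_exists_nnreal_btwn.mp hw
    have hρmem : ((ρ : ℝ) : ℂ) ∈ disk R :=
      hmemdisk (by rw [Complex.norm_real, Real.norm_eq_abs, abs_of_nonneg ρ.coe_nonneg]) hρ2
    have h1 : ‖w‖ < ‖((ρ : ℝ) : ℂ)‖ := by
      rw [Complex.norm_real, Real.norm_eq_abs, abs_of_nonneg ρ.coe_nonneg]
      have : ‖w‖₊ < ρ := by exact_mod_cast hρ1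
      exact_mod_cast this
    have := aux_summable_of_tendsto (norm_nonneg w) h1
      ⟨Φ j (z, ((ρ : ℝ) : ℂ)), hexp j hj (z, ((ρ : ℝ) : ℂ)) ⟨hz, hρmem⟩⟩
    exact this.congr fun n => by simp [norm_mul, norm_pow]
  -- the algebraic relation holds for the values of the convergent series at points of `S`
  have hval : ∀ α ∈ S, ∀ w ∈ disk R,
      (∑' n, f n α * w ^ n) ^ t
        + ∑ j ∈ Finset.range t, Φ (j + 1) (α, w) * (∑' n, f n α * w ^ n) ^ (t - (j + 1)) = 0 := by
    intro α hα w hw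
    have hαD : α ∈ D₁ := hSD hα
    set ev : ((Fin N → ℂ) → ℂ) →+* ℂ := Pi.evalRingHom (fun _ : Fin N → ℂ => ℂ) α with hev
    set Fs : PowerSeries ℂ := PowerSeries.mk fun n => f n α with hFs
    set A : ℕ → PowerSeries ℂ := fun j => PowerSeries.mk fun n => g j n α with hA
    have hmap_mk : ∀ c : ℕ → (Fin N → ℂ) → ℂ,
        PowerSeries.map ev (PowerSeries.mk c) = PowerSeries.mk fun n => c n α := by
      intro c
      apply PowerSeries.ext
      intro n
      rw [PowerSeries.coeff_map, PowerSeries.coeff_mk, PowerSeries.coeff_mk]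
      rfl
    have hmapB : PowerSeries.map ev (∑ j ∈ Finset.range (t + 1),
        PowerSeries.mk (g j) * PowerSeries.mk f ^ (t - j))
        = ∑ j ∈ Finset.range (t + 1), A j * Fs ^ (t - j) := by
      rw [map_sum]
      apply Finset.sum_congr rfl
      intro j _
      rw [map_mul, map_pow, hmap_mk, hmap_mk]
    have hzero : ∑ j ∈ Finset.range (t + 1), A j * Fs ^ (t - j) = 0 := by
      rw [← hmapB]
      ext m
      rw [PowerSeries.coeff_map]
      simpa [hev] using hrel m α hαD
    have hSA_F : auxSAt Fs w := auxSAt_mk (habs_f α hα w hw)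
    have hSA_A : ∀ j ∈ Finset.range (t + 1), auxSAt (A j) w := fun j hj =>
      auxSAt_mk (habs_g j (by simpa [Nat.lt_succ_iff] using hj) α hαD w hw)
    have hterms : ∀ j ∈ Finset.range (t + 1), auxSAt (A j * Fs ^ (t - j)) w := fun j hj =>
      (hSA_A j hj).mul (hSA_F.pow _)
    have h0 : ∑ j ∈ Finset.range (t + 1), auxV (A j) w * (auxV Fs w) ^ (t - j) = 0 := by
      have h1 : auxV (∑ j ∈ Finset.range (t + 1), A j * Fs ^ (t - j)) w = 0 := by
        rw [hzero, auxV_zero]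
      rw [auxV_sum _ _ _ hterms] at h1
      rw [← h1]
      apply Finset.sum_congr rfl
      intro j hj
      rw [auxV_mul (hSA_A j hj) (hSA_F.pow _), auxV_pow hSA_F]
    have hAval : ∀ j, j ≤ t → auxV (A j) w = Φ j (α, w) := by
      intro j hj
      have hSum : HasSum (fun n => g j n α * w ^ n) (auxV (A j) w) := by
        have := (hSA_A j (Finset.mem_range.mpr (by omega))).hasSum
        simpa [hA, PowerSeries.coeff_mk] using this
      exact tendsto_nhds_unique hSum.tendsto_sum_nat (hexp j hj (α, w) ⟨hαD, hw⟩)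
    have hFV : auxV Fs w = ∑' n, f n α * w ^ n := by
      rw [hFs, auxV_mk]
    rw [Finset.sum_range_succ'] at h0
    have h00 : auxV (A 0) w * (auxV Fs w) ^ (t - 0) = (∑' n, f n α * w ^ n) ^ t := by
      rw [hAval 0 (by omega), hΦ0 (α, w) ⟨hαD, hw⟩, hFV, one_mul, Nat.sub_zero]
    rw [h00] at h0
    have hrest : ∀ j ∈ Finset.range t,
        auxV (A (j + 1)) w * (auxV Fs w) ^ (t - (j + 1))
          = Φ (j + 1) (α, w) * (∑' n, f n α * w ^ n) ^ (t - (j + 1)) := by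
      intro j hj
      rw [hAval (j + 1) (by simpa [Nat.succ_le_iff] using Finset.mem_range.mp hj), hFV]
    rw [Finset.sum_congr rfl hrest] at h0
    linear_combination h0
  -- bound for the sum at points of `S`
  have hFb : ∀ α ∈ S, ∀ w ∈ disk R,
      ‖∑' n, f n α * w ^ n‖ ≤ 1 + ∑ j ∈ Finset.range t, ‖Φ (j + 1) (α, w)‖ :=
    fun α hα w hw => aux_root_bound (by omega) _ _ (hval α hα w hw)
  -- locally uniform coefficient bounds
  have hcoeff : ∀ z₀ ∈ D₁, ∀ r : ℝ≥0, 0 < r → (r : ℝ≥0∞) < R →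
      ∃ ε > 0, Metric.ball z₀ ε ⊆ D₁ ∧ ∃ M : ℝ, 0 ≤ M ∧
        ∀ z ∈ Metric.ball z₀ ε, ∀ n, ‖f n z‖ * (r : ℝ) ^ n ≤ M := by
    intro z₀ hz₀ r hr hrR
    obtain ⟨r₂, hrr₂, hr₂R⟩ := ENNReal.lt_iff_exists_nnreal_btwn.mp hrR
    have hrr₂' : (r : ℝ) < (r₂ : ℝ) := by exact_mod_cast hrr₂
    have hr' : (0 : ℝ) < (r : ℝ) := by exact_mod_cast hr
    obtain ⟨δ, hδ, hδsub⟩ := Metric.isOpen_iff.mp hD₁open z₀ hz₀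
    have hεpos : 0 < δ / 2 := by linarith
    have hKsub : Metric.closedBall z₀ (δ / 2) ⊆ D₁ :=
      (Metric.closedBall_subset_ball (by linarith)).trans hδsub
    have hK : IsCompact (Metric.closedBall z₀ (δ / 2) ×ˢ Metric.closedBall (0 : ℂ) (r : ℝ)) :=
      (isCompact_closedBall _ _).prod (isCompact_closedBall _ _)
    have hKD : Metric.closedBall z₀ (δ / 2) ×ˢ Metric.closedBall (0 : ℂ) (r : ℝ)
        ⊆ D₁ ×ˢ disk R := by
      rintro ⟨z, w⟩ ⟨h1, h2⟩
      rw [Metric.mem_closedBall, dist_zero_right] at h2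
      exact ⟨hKsub h1, hmemdisk h2 hrR⟩
    have hcont : ContinuousOn (fun p : (Fin N → ℂ) × ℂ => ∑ j ∈ Finset.range t, ‖Φ (j + 1) p‖)
        (D₁ ×ˢ disk R) := by
      apply continuousOn_finset_sum
      intro j hj
      exact ((hΦ (j + 1) (by simpa [Nat.succ_le_iff] using Finset.mem_range.mp hj)).continuousOn).norm
    obtain ⟨C, hC⟩ := hK.exists_bound_of_continuousOn (hcont.mono hKD)
    have hC0 : 0 ≤ C := by
      have := hC (z₀, 0) ⟨Metric.mem_closedBall_self hεpos.le, Metric.mem_closedBall_self hr'.le⟩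
      exact le_trans (norm_nonneg _) this
    refine ⟨δ / 2 / 2, by linarith, ?_, 1 + C, by linarith, ?_⟩
    · exact (Metric.ball_subset_ball (by linarith)).trans
        ((Metric.ball_subset_closedBall).trans hKsub)
    -- first: the bound at points of `S` inside the closed ball
    have hαb : ∀ α ∈ S, α ∈ Metric.closedBall z₀ (δ / 2) →
        ∀ n, ‖f n α‖ * (r : ℝ) ^ n ≤ 1 + C := by
      intro α hαS hαK
      apply aux_cauchy_bound hr' hrr₂'
      · intro w hw
        exact habs_f α hαS w (hmemdisk hw hr₂R)
      · intro w hw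
        have hwdisk : w ∈ disk R := hmemdisk (hw.trans hrr₂'.le) hr₂R
        refine (hFb α hαS w hwdisk).trans ?_
        have hmem : (α, w) ∈ Metric.closedBall z₀ (δ / 2) ×ˢ Metric.closedBall (0 : ℂ) (r : ℝ) :=
          ⟨hαK, by rwa [Metric.mem_closedBall, dist_zero_right]⟩
        have := hC (α, w) hmem
        rw [Real.norm_eq_abs] at this
        have h2 : ∑ j ∈ Finset.range t, ‖Φ (j + 1) (α, w)‖ ≤ C :=
          (le_abs_self _).trans this
        linarith
    intro z hz n
    have hzK : z ∈ Metric.closedBall z₀ (δ / 2) :=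
      Metric.ball_subset_closedBall ((Metric.ball_subset_ball (by linarith)) hz)
    have hzD : z ∈ D₁ := hKsub hzK
    have hne : (𝓝[S] z).NeBot := mem_closure_iff_nhdsWithin_neBot.mp (hdense hzD)
    have hcontf : Tendsto (fun α => ‖f n α‖ * (r : ℝ) ^ n) (𝓝[S] z)
        (𝓝 (‖f n z‖ * (r : ℝ) ^ n)) := by
      have h1 : ContinuousAt (f n) z :=
        ((hf n).differentiableAt (hD₁open.mem_nhds hzD)).continuousAt
      exact (h1.continuousWithinAt.norm.mul_const _)
    apply le_of_tendsto hcontf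
    have hball : Metric.closedBall z₀ (δ / 2) ∈ 𝓝 z := by
      apply mem_of_superset (Metric.isOpen_ball.mem_nhds ((Metric.ball_subset_ball (by linarith : δ / 2 / 2 ≤ δ / 2)) hz))
      exact Metric.ball_subset_closedBall
    filter_upwards [eventually_nhdsWithin_of_eventually_nhds
      (eventually_of_mem hball fun α hα => hα), eventually_mem_nhdsWithin] with α h1 h2
    exact hαb α h2 h1 n
  -- the local uniform convergence package
  have hpkg : ∀ p ∈ D₁ ×ˢ disk R, ∃ ε > 0, Metric.ball p ε ⊆ D₁ ×ˢ disk R ∧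
      TendstoUniformlyOn (fun m (q : (Fin N → ℂ) × ℂ) => ∑ n ∈ Finset.range m, f n q.1 * q.2 ^ n)
        (fun q => ∑' n, f n q.1 * q.2 ^ n) atTop (Metric.ball p ε) := by
    rintro ⟨z₀, w₀⟩ ⟨hz₀, hw₀⟩
    obtain ⟨r, hr1, hr2⟩ := ENNReal.lt_iff_exists_nnreal_btwn.mp hw₀
    have hw₀r : ‖w₀‖ < (r : ℝ) := by
      have : ‖w₀‖₊ < r := by exact_mod_cast hr1
      exact_mod_cast this
    have hrpos : 0 < r := by
      rw [← NNReal.coe_pos]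
      exact lt_of_le_of_lt (norm_nonneg w₀) hw₀r
    obtain ⟨ε₁, hε₁, hball₁, M, hM0, hM⟩ := hcoeff z₀ hz₀ r hrpos hr2
    set δ : ℝ := min ε₁ (((r : ℝ) - ‖w₀‖) / 2) with hδdef
    have hδpos : 0 < δ := lt_min hε₁ (by linarith)
    have hδ₁ : δ ≤ ε₁ := min_le_left _ _
    have hδ₂ : δ ≤ ((r : ℝ) - ‖w₀‖) / 2 := min_le_right _ _
    have hq1 : ‖w₀‖ + δ < (r : ℝ) := by linarith
    have hmemball : ∀ q : (Fin N → ℂ) × ℂ, q ∈ Metric.ball (z₀, w₀) δ →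
        q.1 ∈ Metric.ball z₀ ε₁ ∧ ‖q.2‖ ≤ ‖w₀‖ + δ := by
      rintro ⟨z, w⟩ hq
      rw [Metric.mem_ball, Prod.dist_eq, max_lt_iff] at hq
      constructor
      · exact Metric.mem_ball.mpr (lt_of_lt_of_le hq.1 hδ₁)
      · have : dist w w₀ < δ := hq.2
        calc ‖w‖ ≤ ‖w₀‖ + dist w w₀ := by
              rw [dist_eq_norm]
              calc ‖w‖ = ‖w₀ + (w - w₀)‖ := by ring_nf
                _ ≤ ‖w₀‖ + ‖w - w₀‖ := norm_add_le _ _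
          _ ≤ ‖w₀‖ + δ := by linarith
    have hsubD : Metric.ball (z₀, w₀) δ ⊆ D₁ ×ˢ disk R := by
      intro q hq
      obtain ⟨h1, h2⟩ := hmemball q hq
      exact ⟨hball₁ h1, hmemdisk (h2.trans hq1.le) hr2⟩
    refine ⟨δ, hδpos, hsubD, ?_⟩
    have hq0 : 0 ≤ (‖w₀‖ + δ) / (r : ℝ) := by positivity
    have hqlt : (‖w₀‖ + δ) / (r : ℝ) < 1 := by
      rw [div_lt_one (by exact_mod_cast hrpos)]
      exact hq1
    apply tendstoUniformlyOn_tsum_nat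
      (hu := ((summable_geometric_of_lt_one hq0 hqlt).mul_left M))
    intro n q hq
    obtain ⟨h1, h2⟩ := hmemball q hq
    have hfb : ‖f n q.1‖ * (r : ℝ) ^ n ≤ M := hM q.1 h1 n
    have hrn : (0 : ℝ) < (r : ℝ) ^ n := by positivity
    calc ‖f n q.1 * q.2 ^ n‖ = ‖f n q.1‖ * ‖q.2‖ ^ n := by rw [norm_mul, norm_pow]
      _ ≤ (M / (r : ℝ) ^ n) * (‖w₀‖ + δ) ^ n := by
          apply mul_le_mul
          · rw [le_div_iff₀ hrn]; exact hfb
          · exact pow_le_pow_left₀ (norm_nonneg _) h2 n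
          · positivity
          · positivity
      _ = M * ((‖w₀‖ + δ) / (r : ℝ)) ^ n := by
          rw [div_pow]
          ring
  -- differentiability of the partial sums
  have hdiffS : ∀ m, DifferentiableOn ℂ
      (fun q : (Fin N → ℂ) × ℂ => ∑ n ∈ Finset.range m, f n q.1 * q.2 ^ n) (D₁ ×ˢ disk R) := by
    intro m
    apply DifferentiableOn.fun_sum
    intro n _
    apply DifferentiableOn.mul
    · exact (hf n).comp differentiable_fst.differentiableOn fun q hq => hq.1
    · exact ((differentiable_pow n).comp differentiable_snd).differentiableOn
  refine ⟨fun p => ∑' n, f n p.1 * p.2 ^ n, ?_, ?_⟩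
  · exact aux_diff_limit hDopen hdiffS hpkg
  · intro p hp
    obtain ⟨ε, hε, hsub, hunif⟩ := hpkg p hp
    exact hunif.tendsto_at (Metric.mem_ball_self hε)


end
end

section
/- Let F(z,w) = ∑_{n=0}^∞ fₙ(z)wⁿ be a Hartogs series on D = D₁ × D₂ satisfying condition (C1) and satisfying condition (C2) with a monic polynomial relation: Φ₀ ≡ 1 and t ≥ 2. Let Δ be a holomorphic function on D, not identically zero, such that for every (z,w) ∈ D, Δ(z,w) = 0 if and only if the complex polynomial X ↦ ∑_{j=0}^t Φⱼ(z,w) X^{t−j} has a repeated complex root. Let E_Δ := {β ∈ D₁ : Δ(β,w) = 0 for all w ∈ D₂}. Then F converges and is holomorphic on (D₁ \ E_Δ) × D₂. -/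
open Filter Topology
open scoped ENNReal

noncomputable section

open Metric
open scoped NNReal


lemma oneD_coeff_bound {h : ℂ → ℂ} {r M : ℝ} (hr : 0 < r)
    (hd : DifferentiableOn ℂ h (Metric.closedBall 0 r))
    (hM : ∀ w ∈ Metric.closedBall (0:ℂ) r, ‖h w‖ ≤ M) (n : ℕ) :
    ‖cauchyPowerSeries h 0 r n‖ ≤ M / r ^ n := by
  have hM0 : 0 ≤ M := le_trans (norm_nonneg (h 0)) (hM 0 (by simp [hr.le]))
  have hcont : Continuous fun θ : ℝ => ‖h (circleMap 0 r θ)‖ := by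
    exact (hd.continuousOn.comp_continuous (continuous_circleMap 0 r)
      (fun θ => circleMap_mem_closedBall 0 hr.le θ)).norm
  have hint : (∫ θ : ℝ in (0)..2 * Real.pi, ‖h (circleMap 0 r θ)‖) ≤
      ∫ _θ : ℝ in (0)..2 * Real.pi, M := by
    apply intervalIntegral.integral_mono_on Real.two_pi_pos.le
      (hcont.intervalIntegrable _ _) intervalIntegrable_const
    exact fun θ _ => hM _ (circleMap_mem_closedBall 0 hr.le θ)
  calc ‖cauchyPowerSeries h 0 r n‖
      ≤ ((2 * Real.pi)⁻¹ * ∫ θ : ℝ in (0)..2 * Real.pi, ‖h (circleMap 0 r θ)‖) * |r|⁻¹ ^ n :=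
        norm_cauchyPowerSeries_le h 0 r n
    _ ≤ ((2 * Real.pi)⁻¹ * (2 * Real.pi * M)) * |r|⁻¹ ^ n := by
        apply mul_le_mul_of_nonneg_right _ (by positivity)
        apply mul_le_mul_of_nonneg_left _ (by positivity)
        exact hint.trans (le_of_eq (by simp [mul_comm]))
    _ = M / r ^ n := by
        have h2 : (2 * Real.pi)⁻¹ * (2 * Real.pi * M) = M := by
          field_simp
        rw [abs_of_pos hr, h2, inv_pow, div_eq_mul_inv]

lemma oneD_deriv_bound {h : ℂ → ℂ} {ρ K : ℝ} (hρ : 0 < ρ)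
    (hd : DifferentiableOn ℂ h (Metric.closedBall 0 ρ))
    (hK : ∀ w ∈ Metric.closedBall (0:ℂ) ρ, ‖h w‖ ≤ K) :
    ‖deriv h 0‖ ≤ K / ρ := by
  set ρ' : ℝ≥0 := ⟨ρ, hρ.le⟩ with hρ'
  have hco : (ρ' : ℝ) = ρ := rfl
  have h1 : HasFPowerSeriesOnBall h (cauchyPowerSeries h 0 ρ') 0 ρ' := by
    apply DifferentiableOn.hasFPowerSeriesOnBall _ (by exact_mod_cast hρ)
    rwa [hco]
  rw [h1.hasFPowerSeriesAt.deriv]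
  calc ‖cauchyPowerSeries h 0 ρ' 1 fun _ => 1‖
      ≤ ‖cauchyPowerSeries h 0 ρ' 1‖ * ∏ _i : Fin 1, ‖(1:ℂ)‖ :=
        ContinuousMultilinearMap.le_opNorm _ _
    _ = ‖cauchyPowerSeries h 0 ρ 1‖ := by simp [hco]
    _ ≤ K / ρ ^ 1 := oneD_coeff_bound hρ hd hK 1
    _ = K / ρ := by rw [pow_one]




lemma fderiv_bound_of_bound {N : ℕ} {φ : (Fin N → ℂ) → ℂ} {U : Set (Fin N → ℂ)} (hU : IsOpen U)
    (hφ : DifferentiableOn ℂ φ U) {z : Fin N → ℂ} {ε K : ℝ} (hε : 0 < ε)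
    (hsub : Metric.closedBall z ε ⊆ U)
    (hK : ∀ y ∈ Metric.closedBall z ε, ‖φ y‖ ≤ K) :
    ‖fderiv ℂ φ z‖ ≤ K / ε := by
  have hK0 : 0 ≤ K := le_trans (norm_nonneg _) (hK z (mem_closedBall_self hε.le))
  apply ContinuousLinearMap.opNorm_le_bound _ (by positivity)
  intro v
  rcases eq_or_ne v 0 with rfl | hv
  · simp
  have hvn : 0 < ‖v‖ := norm_pos_iff.2 hv
  set ρ : ℝ := ε / ‖v‖ with hρdef
  have hρ : 0 < ρ := by positivity
  have hmem : ∀ ζ : ℂ, ζ ∈ Metric.closedBall (0:ℂ) ρ → z + ζ • v ∈ Metric.closedBall z ε := by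
    intro ζ hζ
    rw [Metric.mem_closedBall, dist_eq_norm] at hζ ⊢
    rw [add_sub_cancel_left, norm_smul]
    calc ‖ζ‖ * ‖v‖ ≤ ρ * ‖v‖ := by
          apply mul_le_mul_of_nonneg_right _ hvn.le
          simpa using hζ
      _ = ε := by rw [hρdef]; field_simp
  set ψ : ℂ → ℂ := φ ∘ fun ζ : ℂ => z + ζ • v with hψdef
  have hlin : ∀ ζ₀ : ℂ, HasDerivAt (fun ζ : ℂ => z + ζ • v) v ζ₀ := by
    intro ζ₀
    simpa using ((hasDerivAt_id ζ₀).smul_const v).const_add z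
  have hdψ : DifferentiableOn ℂ ψ (Metric.closedBall 0 ρ) := by
    intro ζ hζ
    have h1 : DifferentiableAt ℂ φ (z + ζ • v) :=
      hφ.differentiableAt (hU.mem_nhds (hsub (hmem ζ hζ)))
    exact (h1.comp ζ (hlin ζ).differentiableAt).differentiableWithinAt
  have hKψ : ∀ w ∈ Metric.closedBall (0:ℂ) ρ, ‖ψ w‖ ≤ K := fun w hw => hK _ (hmem w hw)
  have hd0 : HasDerivAt ψ (fderiv ℂ φ z v) 0 := by
    have h1 : DifferentiableAt ℂ φ (z + (0:ℂ) • v) := by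
      simpa using hφ.differentiableAt (hU.mem_nhds (hsub (mem_closedBall_self hε.le)))
    have := h1.hasFDerivAt.comp_hasDerivAt (0:ℂ) (hlin 0)
    simpa using this
  calc ‖fderiv ℂ φ z v‖ = ‖deriv ψ 0‖ := by rw [hd0.deriv]
    _ ≤ K / ρ := oneD_deriv_bound hρ hdψ hKψ
    _ = K / ε * ‖v‖ := by rw [hρdef, div_div_eq_mul_div, mul_div_right_comm]

lemma mem_disk_iff {R : ℝ≥0∞} {w : ℂ} : w ∈ disk R ↔ ENNReal.ofReal ‖w‖ < R := by
  rw [disk, Set.mem_setOf_eq, ← enorm_eq_nnnorm, ← ofReal_norm]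

/-- terms of a convergent power series are bounded -/
lemma bound_of_tendsto {c : ℕ → ℂ} {x : ℂ} {l : ℂ}
    (h : Tendsto (fun m => ∑ n ∈ Finset.range m, c n * x ^ n) atTop (𝓝 l)) :
    ∃ B : ℝ, 0 ≤ B ∧ ∀ n, ‖c n‖ * ‖x‖ ^ n ≤ B := by
  have hterm : Tendsto (fun n => c n * x ^ n) atTop (𝓝 0) := by
    have h1 := (h.comp (tendsto_add_atTop_nat 1)).sub h
    simp only [Function.comp] at h1
    have h2 : ∀ n : ℕ, c n * x ^ n =
        (∑ k ∈ Finset.range (n + 1), c k * x ^ k) - ∑ k ∈ Finset.range n, c k * x ^ k := by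
      intro n; rw [Finset.sum_range_succ]; ring
    rw [show (fun n : ℕ => c n * x ^ n) = fun n =>
        (∑ k ∈ Finset.range (n + 1), c k * x ^ k) - ∑ k ∈ Finset.range n, c k * x ^ k from
      funext h2]
    simpa using h1
  obtain ⟨B, hB⟩ := hterm.norm.bddAbove_range
  refine ⟨max B 0, le_max_right _ _, fun n => ?_⟩
  have := hB (Set.mem_range_self (f := fun n => ‖c n * x ^ n‖) n)
  rw [norm_mul, norm_pow] at this
  exact this.trans (le_max_left _ _)

lemma summable_norm_of_bound {c : ℕ → ℂ} {w : ℂ} {r₂ B : ℝ} (hr : 0 < r₂)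
    (hb : ∀ n, ‖c n‖ * r₂ ^ n ≤ B) (hw : ‖w‖ < r₂) :
    Summable fun n => ‖c n * w ^ n‖ := by
  apply Summable.of_nonneg_of_le (fun n => norm_nonneg _) (fun n => ?_)
    ((summable_geometric_of_lt_one (by positivity) ((div_lt_one hr).mpr hw)).mul_left B)
  rw [norm_mul, norm_pow]
  calc ‖c n‖ * ‖w‖ ^ n = (‖c n‖ * r₂ ^ n) * (‖w‖ / r₂) ^ n := by
        rw [div_pow]; field_simp
    _ ≤ B * (‖w‖ / r₂) ^ n := mul_le_mul_of_nonneg_right (hb n) (by positivity)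

lemma hasFPowerSeries_of_bound {c : ℕ → ℂ} {r₂ B : ℝ} (hr : 0 < r₂)
    (hb : ∀ n, ‖c n‖ * r₂ ^ n ≤ B) :
    HasFPowerSeriesOnBall (fun w => ∑' n, c n * w ^ n)
      (FormalMultilinearSeries.ofScalars ℂ c) 0 (ENNReal.ofReal r₂) := by
  have hrad : ENNReal.ofReal r₂ ≤ (FormalMultilinearSeries.ofScalars ℂ c).radius := by
    apply FormalMultilinearSeries.le_radius_of_bound _ B (r := r₂.toNNReal)
    intro n
    rw [FormalMultilinearSeries.ofScalars_norm]
    rw [Real.coe_toNNReal _ hr.le]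
    exact hb n
  have hpos : (0 : ℝ≥0∞) < ENNReal.ofReal r₂ := ENNReal.ofReal_pos.mpr hr
  have h := (FormalMultilinearSeries.ofScalars ℂ c).hasFPowerSeriesOnBall (lt_of_lt_of_le hpos hrad)
  have h2 := h.mono hpos hrad
  have heq : (FormalMultilinearSeries.ofScalars ℂ c).sum = fun w => ∑' n, c n * w ^ n := by
    funext w
    rw [show (FormalMultilinearSeries.ofScalars ℂ c).sum = FormalMultilinearSeries.ofScalarsSum c
      from rfl, FormalMultilinearSeries.ofScalars_sum_eq]
    simp [smul_eq_mul]
  rwa [heq] at h2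

lemma coeff_bound_of_sup {c : ℕ → ℂ} {r r₂ M : ℝ} (hr : 0 < r) (hrr : r < r₂)
    (hp : HasFPowerSeriesOnBall (fun w => ∑' n, c n * w ^ n)
      (FormalMultilinearSeries.ofScalars ℂ c) 0 (ENNReal.ofReal r₂))
    (hM : ∀ w ∈ Metric.closedBall (0:ℂ) r, ‖(∑' n, c n * w ^ n : ℂ)‖ ≤ M) (n : ℕ) :
    ‖c n‖ ≤ M / r ^ n := by
  have hd : DifferentiableOn ℂ (fun w => ∑' n, c n * w ^ n) (Metric.closedBall 0 r) := by
    apply hp.differentiableOn.mono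
    intro w hw
    rw [EMetric.mem_ball, edist_zero_right, ← ofReal_norm]
    exact ENNReal.ofReal_lt_ofReal_iff_of_nonneg (norm_nonneg _) |>.2
      (lt_of_le_of_lt (mem_closedBall_zero_iff.1 hw) hrr)
  set rN : ℝ≥0 := ⟨r, hr.le⟩ with hrN
  have hco : (rN : ℝ) = r := rfl
  have hq : HasFPowerSeriesOnBall (fun w => ∑' n, c n * w ^ n)
      (cauchyPowerSeries (fun w => ∑' n, c n * w ^ n) 0 rN) 0 rN := by
    apply DifferentiableOn.hasFPowerSeriesOnBall _ (by exact_mod_cast hr)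
    rwa [hco]
  have heq := hp.hasFPowerSeriesAt.eq_formalMultilinearSeries hq.hasFPowerSeriesAt
  calc ‖c n‖ = ‖(FormalMultilinearSeries.ofScalars ℂ c n) (fun _ => 1)‖ := by
        rw [FormalMultilinearSeries.ofScalars_apply_eq]; simp
    _ ≤ ‖FormalMultilinearSeries.ofScalars ℂ c n‖ := by
        simpa using (FormalMultilinearSeries.ofScalars ℂ c n).le_opNorm (fun _ => 1)
    _ = ‖cauchyPowerSeries (fun w => ∑' n, c n * w ^ n) 0 r n‖ := by rw [heq, hco]
    _ ≤ M / r ^ n := oneD_coeff_bound hr hd hM n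

lemma root_bound (t : ℕ) (ht : 1 ≤ t) (a : ℕ → ℂ) (x : ℂ) (ha0 : a 0 = 1)
    (heq : ∑ j ∈ Finset.range (t + 1), a j * x ^ (t - j) = 0) :
    ‖x‖ ≤ 1 + ∑ j ∈ Finset.Ico 1 (t + 1), ‖a j‖ := by
  set s : ℝ := ∑ j ∈ Finset.Ico 1 (t + 1), ‖a j‖ with hs
  have hs0 : 0 ≤ s := Finset.sum_nonneg fun j _ => norm_nonneg _
  have hsplit : x ^ t + ∑ j ∈ Finset.Ico 1 (t + 1), a j * x ^ (t - j) = 0 := by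
    rw [← heq, Finset.range_eq_Ico, Finset.sum_eq_sum_Ico_succ_bot (Nat.succ_pos t), ha0,
      one_mul, Nat.sub_zero, zero_add]
  rcases le_or_gt ‖x‖ 1 with h1 | h1
  · linarith
  have hxpow : ‖x‖ ^ t ≤ s * ‖x‖ ^ (t - 1) := by
    have hx : x ^ t = -∑ j ∈ Finset.Ico 1 (t + 1), a j * x ^ (t - j) := by
      linear_combination hsplit
    calc ‖x‖ ^ t = ‖x ^ t‖ := (norm_pow x t).symm
      _ = ‖∑ j ∈ Finset.Ico 1 (t + 1), a j * x ^ (t - j)‖ := by rw [hx, norm_neg]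
      _ ≤ ∑ j ∈ Finset.Ico 1 (t + 1), ‖a j * x ^ (t - j)‖ := norm_sum_le _ _
      _ ≤ ∑ j ∈ Finset.Ico 1 (t + 1), ‖a j‖ * ‖x‖ ^ (t - 1) := by
          apply Finset.sum_le_sum
          intro j hj
          rw [norm_mul, norm_pow]
          apply mul_le_mul_of_nonneg_left _ (norm_nonneg _)
          apply pow_le_pow_right₀ h1.le
          exact Nat.sub_le_sub_left (Finset.mem_Ico.1 hj).1 t
      _ = s * ‖x‖ ^ (t - 1) := by rw [← Finset.sum_mul]
  have hxt : ‖x‖ ^ t = ‖x‖ * ‖x‖ ^ (t - 1) := by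
    conv_lhs => rw [show t = (t - 1) + 1 from (Nat.succ_pred_eq_of_pos ht).symm]
    rw [pow_succ]; ring
  have hpos : (0:ℝ) < ‖x‖ ^ (t - 1) := pow_pos (lt_trans one_pos h1) _
  have : ‖x‖ ≤ s := by
    rw [hxt] at hxpow
    exact le_of_mul_le_mul_right (by linarith [hxpow]) hpos
  linarith



/-- A power series over ℂ sums absolutely to `s` at the point `w`. -/
def SumsTo (A : PowerSeries ℂ) (w s : ℂ) : Prop :=
  Summable (fun n => ‖(PowerSeries.coeff n) A * w ^ n‖) ∧
  HasSum (fun n => (PowerSeries.coeff n) A * w ^ n) s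

lemma SumsTo.mul {A B : PowerSeries ℂ} {w a b : ℂ} (hA : SumsTo A w a) (hB : SumsTo B w b) :
    SumsTo (A * B) w (a * b) := by
  have key : ∀ n : ℕ, (PowerSeries.coeff n) (A * B) * w ^ n =
      ∑ kl ∈ Finset.HasAntidiagonal.antidiagonal n,
        ((PowerSeries.coeff kl.1) A * w ^ kl.1) * ((PowerSeries.coeff kl.2) B * w ^ kl.2) := by
    intro n
    rw [PowerSeries.coeff_mul, Finset.sum_mul]
    apply Finset.sum_congr rfl
    intro kl hkl
    rw [Finset.HasAntidiagonal.mem_antidiagonal] at hkl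
    rw [← hkl, pow_add]; ring
  have hs := summable_norm_sum_mul_antidiagonal_of_summable_norm hA.1 hB.1
  constructor
  · exact hs.congr fun n => by rw [key]
  · have hprod := tsum_mul_tsum_eq_tsum_sum_antidiagonal_of_summable_norm hA.1 hB.1
    rw [hA.2.tsum_eq, hB.2.tsum_eq] at hprod
    have h2 : HasSum (fun n => ∑ kl ∈ Finset.HasAntidiagonal.antidiagonal n,
        ((PowerSeries.coeff kl.1) A * w ^ kl.1) * ((PowerSeries.coeff kl.2) B * w ^ kl.2))
        (a * b) := by
      rw [hprod]
      exact hs.of_norm.hasSum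
    rw [show (fun n : ℕ => (PowerSeries.coeff n) (A * B) * w ^ n) = _ from funext key]
    exact h2

lemma sumsTo_one {w : ℂ} : SumsTo 1 w 1 := by
  have key : (fun n : ℕ => (PowerSeries.coeff n) 1 * w ^ n) =
      fun n : ℕ => if n = 0 then (1:ℂ) else 0 := by
    funext n
    rcases eq_or_ne n 0 with rfl | hn
    · simp
    · simp [PowerSeries.coeff_one, hn]
  constructor
  · apply (hasSum_ite_eq (0:ℕ) (1:ℝ)).summable.congr
    intro n
    rcases eq_or_ne n 0 with rfl | hn
    · simp
    · simp [PowerSeries.coeff_one, hn]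
  · rw [key]
    exact hasSum_ite_eq (0:ℕ) (1:ℂ)

lemma SumsTo.pow {A : PowerSeries ℂ} {w a : ℂ} (hA : SumsTo A w a) (k : ℕ) :
    SumsTo (A ^ k) w (a ^ k) := by
  induction k with
  | zero => simpa using sumsTo_one
  | succ k ih => rw [pow_succ, pow_succ]; exact ih.mul hA

lemma sumsTo_zero {w : ℂ} : SumsTo 0 w 0 := by
  constructor
  · simpa using summable_zero
  · simpa using hasSum_zero

lemma SumsTo.add {A B : PowerSeries ℂ} {w a b : ℂ} (hA : SumsTo A w a) (hB : SumsTo B w b) :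
    SumsTo (A + B) w (a + b) := by
  constructor
  · apply Summable.of_nonneg_of_le (fun n => norm_nonneg _) (fun n => ?_) (hA.1.add hB.1)
    rw [map_add, add_mul]
    exact norm_add_le _ _
  · have h2 := hA.2.add hB.2
    rw [show (fun n : ℕ => (PowerSeries.coeff n) (A + B) * w ^ n) = _ from
      funext fun n => by rw [map_add, add_mul]]
    exact h2

lemma sumsTo_sum {ι : Type*} (s : Finset ι) (A : ι → PowerSeries ℂ) (a : ι → ℂ) {w : ℂ}
    (h : ∀ i ∈ s, SumsTo (A i) w (a i)) :
    SumsTo (∑ i ∈ s, A i) w (∑ i ∈ s, a i) := by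
  classical
  induction s using Finset.induction_on with
  | empty => simpa using sumsTo_zero
  | insert i s' hni ih =>
    rw [Finset.sum_insert hni, Finset.sum_insert hni]
    exact (h i (Finset.mem_insert_self i s')).add (ih fun j hj => h j (Finset.mem_insert_of_mem hj))

lemma SumsTo.eq_zero {w s : ℂ} (h : SumsTo 0 w s) : s = 0 := by
  have h2 : HasSum (fun _ : ℕ => (0:ℂ)) s := h.2.congr_fun fun n => by simp
  exact h2.unique hasSum_zero

/-- Evaluation of the formal relation at a point of `D₁`. -/
lemma eval_rel {N : ℕ} {f : ℕ → (Fin N → ℂ) → ℂ} {g : ℕ → ℕ → (Fin N → ℂ) → ℂ} {t : ℕ}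
    {D₁ : Set (Fin N → ℂ)}
    (hrel : FormalAlgRel f g t D₁)
    {α : Fin N → ℂ} (hα : α ∈ D₁) :
    (∑ j ∈ Finset.range (t + 1),
      PowerSeries.mk (fun n => g j n α) * (PowerSeries.mk (fun n => f n α)) ^ (t - j)) = 0 := by
  set φ : ((Fin N → ℂ) → ℂ) →+* ℂ := Pi.evalRingHom (fun _ : Fin N → ℂ => ℂ) α with hφ
  have hmap : ∀ h : ℕ → (Fin N → ℂ) → ℂ,
      PowerSeries.map φ (PowerSeries.mk h) = PowerSeries.mk (fun n => h n α) := by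
    intro h
    ext n
    rw [PowerSeries.coeff_map, PowerSeries.coeff_mk, PowerSeries.coeff_mk]
    rfl
  calc (∑ j ∈ Finset.range (t + 1),
        PowerSeries.mk (fun n => g j n α) * (PowerSeries.mk (fun n => f n α)) ^ (t - j))
      = PowerSeries.map φ (∑ j ∈ Finset.range (t + 1),
          PowerSeries.mk (g j) * (PowerSeries.mk f) ^ (t - j)) := by
        rw [map_sum]
        apply Finset.sum_congr rfl
        intro j _
        rw [map_mul, map_pow, hmap, hmap]
    _ = 0 := by
        ext m
        rw [PowerSeries.coeff_map]
        exact (hrel m α hα).trans (by simp)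




lemma key_bound {N : ℕ} {D₁ : Set (Fin N → ℂ)} (hD₁open : IsOpen D₁)
    {R : ℝ≥0∞} {f : ℕ → (Fin N → ℂ) → ℂ} (hf : ∀ n, DifferentiableOn ℂ (f n) D₁)
    (hC1 : CondC1 f D₁ R)
    {t : ℕ} (ht : 1 ≤ t) {Φ : ℕ → (Fin N → ℂ) × ℂ → ℂ} {g : ℕ → ℕ → (Fin N → ℂ) → ℂ}
    (hΦ : ∀ j, j ≤ t → DifferentiableOn ℂ (Φ j) (D₁ ×ˢ disk R))
    (hexp : ∀ j, j ≤ t → ∀ p ∈ D₁ ×ˢ disk R,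
      Tendsto (fun m => ∑ n ∈ Finset.range m, g j n p.1 * p.2 ^ n) atTop (𝓝 (Φ j p)))
    (hΦ0 : ∀ p ∈ D₁ ×ˢ disk R, Φ 0 p = 1)
    (hrel : FormalAlgRel f g t D₁)
    {z₀ : Fin N → ℂ} (hz₀ : z₀ ∈ D₁) {r : ℝ} (hr : 0 < r) (hrR : ENNReal.ofReal r < R) :
    ∃ ε > 0, Metric.ball z₀ ε ⊆ D₁ ∧ ∃ M : ℝ, 0 ≤ M ∧
      ∀ z ∈ Metric.ball z₀ ε, ∀ n, ‖f n z‖ ≤ M / r ^ n := by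
  obtain ⟨r₂, hr₂0, h1, h2⟩ := ENNReal.lt_iff_exists_real_btwn.1 hrR
  have hrr₂ : r < r₂ := (ENNReal.ofReal_lt_ofReal_iff_of_nonneg hr.le).1 h1
  have hr₂pos : 0 < r₂ := lt_trans hr hrr₂
  obtain ⟨δ, hδ, hball⟩ := Metric.isOpen_iff.1 hD₁open z₀ hz₀
  set ε := δ / 2 with hεdef
  have hε : 0 < ε := by positivity
  have hcb : Metric.closedBall z₀ ε ⊆ D₁ :=
    (Metric.closedBall_subset_ball (by rw [hεdef]; linarith)).trans hball
  have hballD : Metric.ball z₀ ε ⊆ D₁ := Metric.ball_subset_closedBall.trans hcb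
  set K : Set ((Fin N → ℂ) × ℂ) := Metric.closedBall z₀ ε ×ˢ Metric.closedBall (0:ℂ) r₂ with hK
  have hKsub : K ⊆ D₁ ×ˢ disk R := by
    intro p hp
    refine ⟨hcb hp.1, mem_disk_iff.2 ?_⟩
    exact lt_of_le_of_lt (ENNReal.ofReal_le_ofReal (mem_closedBall_zero_iff.1 hp.2)) h2
  have hKcomp : IsCompact K := (isCompact_closedBall _ _).prod (isCompact_closedBall _ _)
  set Ψ : (Fin N → ℂ) × ℂ → ℝ := fun p => ∑ j ∈ Finset.Ico 1 (t+1), ‖Φ j p‖ with hΨ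
  have hΨcont : ContinuousOn Ψ K := by
    apply continuousOn_finset_sum
    intro j hj
    have hjt : j ≤ t := Nat.lt_succ_iff.1 (Finset.mem_Ico.1 hj).2
    exact (((hΦ j hjt).continuousOn).mono hKsub).norm
  obtain ⟨C, hC⟩ := hKcomp.exists_bound_of_continuousOn hΨcont
  have hΨC : ∀ p ∈ K, Ψ p ≤ C := fun p hp =>
    le_trans (le_abs_self _) (by simpa [Real.norm_eq_abs] using hC p hp)
  have hC0 : 0 ≤ C := by
    have hmem : ((z₀, 0) : (Fin N → ℂ) × ℂ) ∈ K :=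
      ⟨mem_closedBall_self hε.le, mem_closedBall_self hr₂pos.le⟩
    exact le_trans (Finset.sum_nonneg fun j _ => norm_nonneg _) (hΨC _ hmem)
  obtain ⟨S, hS1, hS2, hS3⟩ := hC1
  have hnr₂ : ‖(r₂:ℂ)‖ = r₂ := by rw [Complex.norm_real, Real.norm_eq_abs, abs_of_pos hr₂pos]
  have hr₂disk : ((r₂:ℂ)) ∈ disk R := by
    rw [mem_disk_iff, hnr₂]
    exact h2
  have core : ∀ α ∈ S, α ∈ Metric.ball z₀ ε → ∀ n, ‖f n α‖ ≤ (1 + C) / r ^ n := by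
    intro α hαS hαb n
    have hαD : α ∈ D₁ := hS1 hαS
    obtain ⟨l, hl⟩ := hS3 α hαS _ hr₂disk
    obtain ⟨B, hB0, hB⟩ := bound_of_tendsto hl
    replace hB : ∀ n, ‖f n α‖ * r₂ ^ n ≤ B := fun n => by
      have := hB n; rwa [hnr₂] at this
    have hgB : ∀ j, j ≤ t → ∃ B' : ℝ, ∀ n, ‖g j n α‖ * r₂ ^ n ≤ B' := by
      intro j hj
      obtain ⟨B', _, hB'⟩ := bound_of_tendsto (hexp j hj (α, (r₂:ℂ)) ⟨hαD, hr₂disk⟩)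
      exact ⟨B', fun n => by have := hB' n; rwa [hnr₂] at this⟩
    have hps := hasFPowerSeries_of_bound hr₂pos hB
    have hsup : ∀ w ∈ Metric.closedBall (0:ℂ) r, ‖(∑' n, f n α * w ^ n : ℂ)‖ ≤ 1 + C := by
      intro w hw
      have hwr₂ : ‖w‖ < r₂ := lt_of_le_of_lt (mem_closedBall_zero_iff.1 hw) hrr₂
      have hwdisk : w ∈ disk R :=
        mem_disk_iff.2 (lt_trans ((ENNReal.ofReal_lt_ofReal_iff hr₂pos).2 hwr₂) h2)
      have hpmem : ((α, w) : (Fin N → ℂ) × ℂ) ∈ D₁ ×ˢ disk R := ⟨hαD, hwdisk⟩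
      have hFsum : Summable fun n => ‖f n α * w ^ n‖ := summable_norm_of_bound hr₂pos hB hwr₂
      have hF : SumsTo (PowerSeries.mk fun n => f n α) w (∑' n, f n α * w ^ n) := by
        constructor
        · simpa [PowerSeries.coeff_mk] using hFsum
        · simpa [PowerSeries.coeff_mk] using hFsum.of_norm.hasSum
      have hG : ∀ j, j ≤ t → SumsTo (PowerSeries.mk fun n => g j n α) w (Φ j (α, w)) := by
        intro j hj
        obtain ⟨B', hB'⟩ := hgB j hj
        have hGsum : Summable fun n => ‖g j n α * w ^ n‖ := summable_norm_of_bound hr₂pos hB' hwr₂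
        have hhs := hGsum.of_norm.hasSum
        have heq : (∑' n, g j n α * w ^ n) = Φ j (α, w) :=
          tendsto_nhds_unique hhs.tendsto_sum_nat (hexp j hj (α, w) hpmem)
        have hhs2 := heq ▸ hhs
        constructor
        · simpa [PowerSeries.coeff_mk] using hGsum
        · simpa [PowerSeries.coeff_mk] using hhs2
      have hzero := eval_rel hrel hαD
      have hsum := sumsTo_sum (Finset.range (t+1))
        (fun j => PowerSeries.mk (fun n => g j n α) * (PowerSeries.mk fun n => f n α) ^ (t - j))
        (fun j => Φ j (α, w) * (∑' n, f n α * w ^ n) ^ (t - j))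
        (fun j hj => (hG j (Nat.lt_succ_iff.1 (Finset.mem_range.1 hj))).mul (hF.pow (t - j)))
      rw [hzero] at hsum
      have hval := hsum.eq_zero
      have hbound := root_bound t ht (fun j => Φ j (α, w)) (∑' n, f n α * w ^ n)
        (hΦ0 _ hpmem) hval
      have hKmem : ((α, w) : (Fin N → ℂ) × ℂ) ∈ K :=
        ⟨Metric.ball_subset_closedBall hαb,
          mem_closedBall_zero_iff.2 (le_trans (mem_closedBall_zero_iff.1 hw) hrr₂.le)⟩
      have hΨval := hΨC _ hKmem
      calc ‖(∑' n, f n α * w ^ n : ℂ)‖ ≤ 1 + Ψ (α, w) := hbound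
        _ ≤ 1 + C := by linarith
    exact coeff_bound_of_sup hr hrr₂ hps hsup n
  refine ⟨ε, hε, hballD, 1 + C, by linarith, ?_⟩
  intro z hz n
  have hzD : z ∈ D₁ := hballD hz
  have hcl : z ∈ closure (S ∩ Metric.ball z₀ ε) := by
    rw [mem_closure_iff_nhds]
    intro U hU
    have h3 : U ∩ Metric.ball z₀ ε ∈ 𝓝 z := Filter.inter_mem hU (Metric.isOpen_ball.mem_nhds hz)
    obtain ⟨y, hyt, hys⟩ := mem_closure_iff_nhds.1 (hS2 hzD) _ h3
    exact ⟨y, hyt.1, hys, hyt.2⟩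
  have hcont : ContinuousWithinAt (f n) (S ∩ Metric.ball z₀ ε) z :=
    (((hf n).differentiableAt (hD₁open.mem_nhds hzD)).continuousAt).continuousWithinAt
  have hne : (𝓝[S ∩ Metric.ball z₀ ε] z).NeBot := mem_closure_iff_nhdsWithin_neBot.1 hcl
  apply le_of_tendsto hcont.norm
  filter_upwards [self_mem_nhdsWithin] with y hy
  exact core y hy.1 hy.2 n

set_option maxHeartbeats 1000000 in
/-- **Step 4 lemma.** Suppose `F` satisfies (C1) and a monic algebraic relation (`Φ₀ ≡ 1`,
`t ≥ 2`). Let `Δ` be a holomorphic function on `D`, not identically zero, vanishing exactly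
where the polynomial `∑ Φⱼ(z,w) X^{t-j}` has a repeated complex root, and let
`E_Δ = {β ∈ D₁ | Δ(β,·) ≡ 0 on D₂}`. Then `F` converges and is holomorphic on
`(D₁ \ E_Δ) × D₂`. -/
theorem hartogs_series_holomorphic_off_degenerate_discriminant
    (N : ℕ) (hN : 1 ≤ N)
    (D₁ : Set (Fin N → ℂ)) (hD₁open : IsOpen D₁) (hD₁conn : IsConnected D₁)
    (R : ℝ≥0∞) (hR : 0 < R)
    (f : ℕ → (Fin N → ℂ) → ℂ) (hf : ∀ n, DifferentiableOn ℂ (f n) D₁)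
    (hC1 : CondC1 f D₁ R)
    -- condition (C2) with a monic relation: `Φ₀ ≡ 1` and `t ≥ 2`:
    (t : ℕ) (ht : 2 ≤ t)
    (Φ : ℕ → (Fin N → ℂ) × ℂ → ℂ) (g : ℕ → ℕ → (Fin N → ℂ) → ℂ)
    (hΦ : ∀ j, j ≤ t → DifferentiableOn ℂ (Φ j) (D₁ ×ˢ disk R))
    (hg : ∀ j n, j ≤ t → DifferentiableOn ℂ (g j n) D₁)
    (hexp : ∀ j, j ≤ t → ∀ p ∈ D₁ ×ˢ disk R,
      Tendsto (fun m => ∑ n ∈ Finset.range m, g j n p.1 * p.2 ^ n) atTop (𝓝 (Φ j p)))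
    (hΦ0 : ∀ p ∈ D₁ ×ˢ disk R, Φ 0 p = 1)
    (hg00 : ∀ z ∈ D₁, g 0 0 z = 1)
    (hg0n : ∀ n, 1 ≤ n → ∀ z ∈ D₁, g 0 n z = 0)
    (hrel : FormalAlgRel f g t D₁)
    -- `Δ` is not identically zero and vanishes exactly where there is a repeated root:
    (Δ : (Fin N → ℂ) × ℂ → ℂ) (hΔ : DifferentiableOn ℂ Δ (D₁ ×ˢ disk R))
    (hΔne : ∃ p ∈ D₁ ×ˢ disk R, Δ p ≠ 0)
    (hΔzero : ∀ p ∈ D₁ ×ˢ disk R, (Δ p = 0 ↔ ∃ x : ℂ, (Polynomial.X - Polynomial.C x) ^ 2 ∣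
      ∑ j ∈ Finset.range (t + 1), Polynomial.C (Φ j p) * Polynomial.X ^ (t - j))) :
    HolSumOn f ((D₁ \ {β ∈ D₁ | ∀ w ∈ disk R, Δ (β, w) = 0}) ×ˢ disk R) := by
  set G : (Fin N → ℂ) × ℂ → ℂ := fun p => ∑' n, f n p.1 * p.2 ^ n with hGdef
  have main : ∀ p : (Fin N → ℂ) × ℂ, p ∈ (D₁ ×ˢ disk R : Set _) →
      (Summable fun n => ‖f n p.1 * p.2 ^ n‖) ∧ DifferentiableAt ℂ G p := by
    rintro ⟨z, w⟩ ⟨hz, hw⟩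
    have h0 : ENNReal.ofReal ‖w‖ < R := mem_disk_iff.1 hw
    obtain ⟨r, hr0, h1, h2⟩ := ENNReal.lt_iff_exists_real_btwn.1 h0
    have hpr : ‖w‖ < r := (ENNReal.ofReal_lt_ofReal_iff_of_nonneg (norm_nonneg _)).1 h1
    have hr : 0 < r := lt_of_le_of_lt (norm_nonneg _) hpr
    obtain ⟨ε, hε, hballD, M, hM0, hbound⟩ :=
      key_bound hD₁open hf hC1 (le_trans one_le_two ht) hΦ hexp hΦ0 hrel hz hr h2
    set r' : ℝ := (‖w‖ + r) / 2 with hr'def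
    have hwr' : ‖w‖ < r' := by rw [hr'def]; linarith
    have hr'r : r' < r := by rw [hr'def]; linarith
    have hr'0 : 0 < r' := lt_of_le_of_lt (norm_nonneg _) hwr'
    set x : ℝ := r' / r with hxdef
    have hx0 : 0 < x := by positivity
    have hx1 : x < 1 := (div_lt_one hr).2 hr'r
    clear_value x r'
    set s : Set ((Fin N → ℂ) × ℂ) := Metric.ball z (ε/2) ×ˢ Metric.ball (0:ℂ) r' with hsdef
    have hsopen : IsOpen s := Metric.isOpen_ball.prod Metric.isOpen_ball
    have hsconn : IsPreconnected s :=
      IsPreconnected.prod (convex_ball z (ε/2)).isPreconnected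
        (convex_ball (0:ℂ) r').isPreconnected
    have hps : ((z, w) : (Fin N → ℂ) × ℂ) ∈ s :=
      ⟨mem_ball_self (by positivity), mem_ball_zero_iff.2 hwr'⟩
    have hsubD : ∀ q : (Fin N → ℂ) × ℂ, q ∈ s → q.1 ∈ Metric.ball z ε := fun q hq =>
      Metric.ball_subset_ball (by linarith) hq.1
    set F' : ℕ → ((Fin N → ℂ) × ℂ) → (((Fin N → ℂ) × ℂ) →L[ℂ] ℂ) := fun n q =>
      f n q.1 • (((n:ℂ) * q.2 ^ (n-1)) • ContinuousLinearMap.snd ℂ (Fin N → ℂ) ℂ) +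
      q.2 ^ n • ((fderiv ℂ (f n) q.1).comp (ContinuousLinearMap.fst ℂ (Fin N → ℂ) ℂ))
      with hF'def
    have hder : ∀ (n : ℕ) (q : (Fin N → ℂ) × ℂ), q ∈ s →
        HasFDerivAt (fun q : (Fin N → ℂ) × ℂ => f n q.1 * q.2 ^ n) (F' n q) q := by
      intro n q hq
      have hq1D : q.1 ∈ D₁ := hballD (hsubD q hq)
      have hc1 : HasFDerivAt (fun q : (Fin N → ℂ) × ℂ => f n q.1)
          ((fderiv ℂ (f n) q.1).comp (ContinuousLinearMap.fst ℂ (Fin N → ℂ) ℂ)) q :=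
        ((hf n).differentiableAt (hD₁open.mem_nhds hq1D)).hasFDerivAt.comp q hasFDerivAt_fst
      have hc2 : HasFDerivAt (fun q : (Fin N → ℂ) × ℂ => q.2 ^ n)
          (((n:ℂ) * q.2 ^ (n-1)) • ContinuousLinearMap.snd ℂ (Fin N → ℂ) ℂ) q :=
        (hasDerivAt_pow n q.2).comp_hasFDerivAt q hasFDerivAt_snd
      exact hc1.mul hc2
    set u : ℕ → ℝ := fun n => (M / r') * ((n:ℝ) * x ^ n) + (M / (ε/4)) * x ^ n with hudef
    have hu : Summable u := by
      apply Summable.add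
      · apply Summable.mul_left
        have hs1 := summable_pow_mul_geometric_of_norm_lt_one 1 (r := x)
          (by rw [Real.norm_eq_abs, abs_of_pos hx0]; exact hx1)
        exact hs1.congr fun n => by rw [pow_one]
      · exact (summable_geometric_of_lt_one hx0.le hx1).mul_left _
    have hF'le : ∀ (n : ℕ) (q : (Fin N → ℂ) × ℂ), q ∈ s → ‖F' n q‖ ≤ u n := by
      intro n q hq
      have hq2 : ‖q.2‖ ≤ r' := (mem_ball_zero_iff.1 hq.2).le
      have hq1b : ‖f n q.1‖ ≤ M / r ^ n := hbound q.1 (hsubD q hq) n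
      have hsubU : Metric.closedBall q.1 (ε/4) ⊆ Metric.ball z ε := by
        intro y hy
        rw [Metric.mem_ball]
        calc dist y z ≤ dist y q.1 + dist q.1 z := dist_triangle _ _ _
          _ ≤ ε/4 + ε/2 := add_le_add (Metric.mem_closedBall.1 hy) (Metric.mem_ball.1 hq.1).le
          _ < ε := by linarith
      have hKf : ∀ y ∈ Metric.closedBall q.1 (ε/4), ‖f n y‖ ≤ M / r ^ n := fun y hy =>
        hbound y (hsubU hy) n
      have hfd : ‖fderiv ℂ (f n) q.1‖ ≤ (M / r ^ n) / (ε/4) :=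
        fderiv_bound_of_bound hD₁open (hf n) (by positivity)
          (hsubU.trans hballD) hKf
      have hb1 : ‖(n:ℂ) * q.2 ^ (n-1)‖ ≤ (n:ℝ) * r' ^ (n-1) := by
        rw [norm_mul, Complex.norm_natCast, norm_pow]
        exact mul_le_mul_of_nonneg_left (pow_le_pow_left₀ (norm_nonneg _) hq2 _)
          (Nat.cast_nonneg n)
      have hterm1 : ‖f n q.1 • (((n:ℂ) * q.2 ^ (n-1)) •
          ContinuousLinearMap.snd ℂ (Fin N → ℂ) ℂ)‖ ≤ (M / r ^ n) * ((n:ℝ) * r' ^ (n-1)) := by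
        refine le_trans (ContinuousLinearMap.opNorm_smul_le _ _) ?_
        refine le_trans (mul_le_mul_of_nonneg_left (ContinuousLinearMap.opNorm_smul_le _ _)
          (norm_nonneg _)) ?_
        have hsnd := ContinuousLinearMap.norm_snd_le (𝕜 := ℂ) (E := Fin N → ℂ) (F := ℂ)
        calc ‖f n q.1‖ * (‖(n:ℂ) * q.2 ^ (n-1)‖ * ‖ContinuousLinearMap.snd ℂ (Fin N → ℂ) ℂ‖)
            ≤ (M / r ^ n) * (((n:ℝ) * r' ^ (n-1)) * 1) := by
              apply mul_le_mul hq1b _ (by positivity) (by positivity)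
              exact mul_le_mul hb1 hsnd (norm_nonneg _) (by positivity)
          _ = (M / r ^ n) * ((n:ℝ) * r' ^ (n-1)) := by ring
      have hterm2 : ‖q.2 ^ n • ((fderiv ℂ (f n) q.1).comp
          (ContinuousLinearMap.fst ℂ (Fin N → ℂ) ℂ))‖ ≤ r' ^ n * ((M / r ^ n) / (ε/4)) := by
        refine le_trans (ContinuousLinearMap.opNorm_smul_le _ _) ?_
        have hfst := ContinuousLinearMap.norm_fst_le (𝕜 := ℂ) (E := Fin N → ℂ) (F := ℂ)
        calc ‖q.2 ^ n‖ * ‖(fderiv ℂ (f n) q.1).comp (ContinuousLinearMap.fst ℂ (Fin N → ℂ) ℂ)‖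
            ≤ r' ^ n * (((M / r ^ n) / (ε/4)) * 1) := by
              rw [norm_pow]
              apply mul_le_mul (pow_le_pow_left₀ (norm_nonneg _) hq2 _) _ (norm_nonneg _)
                (by positivity)
              refine le_trans (ContinuousLinearMap.opNorm_comp_le _ _) ?_
              exact mul_le_mul hfd hfst (norm_nonneg _) (by positivity)
          _ = r' ^ n * ((M / r ^ n) / (ε/4)) := by ring
      have hi1 : (M / r ^ n) * ((n:ℝ) * r' ^ (n-1)) ≤ (M / r') * ((n:ℝ) * x ^ n) := by
        cases n with
        | zero => simp
        | succ m =>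
          apply le_of_eq
          rw [hxdef, div_pow]
          simp only [Nat.add_sub_cancel]
          field_simp
          ring
      have hi2 : r' ^ n * ((M / r ^ n) / (ε/4)) ≤ (M / (ε/4)) * x ^ n := by
        apply le_of_eq
        rw [hxdef, div_pow]
        field_simp
      refine le_trans (norm_add_le _ _) ?_
      exact le_trans (add_le_add hterm1 hterm2) (add_le_add hi1 hi2)
    have hsum0 : Summable fun n => ‖f n z * w ^ n‖ := by
      apply summable_norm_of_bound hr (B := M) _ hpr
      intro n
      have hb := hbound z (mem_ball_self hε) n
      calc ‖f n z‖ * r ^ n ≤ (M / r ^ n) * r ^ n :=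
            mul_le_mul_of_nonneg_right hb (by positivity)
        _ = M := div_mul_cancel₀ _ (by positivity)
    have hG' := hasFDerivAt_tsum_of_isPreconnected hu hsopen hsconn hder hF'le hps
      hsum0.of_norm hps
    exact ⟨hsum0, hG'.differentiableAt⟩
  refine ⟨G, ?_, ?_⟩
  · intro p hp
    exact (main p ⟨hp.1.1, hp.2⟩).2.differentiableWithinAt
  · intro p hp
    exact ((main p ⟨hp.1.1, hp.2⟩).1.of_norm.hasSum).tendsto_sum_nat

end
end

section
/- If x ∈ ℝ is irrational, then there exist infinitely many positive integers n such that |d(n! · x)| ≥ 1/(2(n+1)), where d(y) denotes the signed minimal distance from y to ℤ. -/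
open Filter Topology

noncomputable section

/-- The nearest integer to `x`, with the convention that half-integers round down:
`e(x) = ⌊x⌋` when `x - ⌊x⌋ ≤ 1/2`, and `e(x) = ⌊x⌋ + 1` otherwise. -/
def nearestInt (x : ℝ) : ℤ := if x - ⌊x⌋ ≤ 1 / 2 then ⌊x⌋ else ⌊x⌋ + 1

/-- The signed minimal distance `d(x) = x - e(x)` from `x` to `ℤ`. -/
def signedDistToInt (x : ℝ) : ℝ := x - nearestInt x

lemma abs_signedDist_le (y : ℝ) : |signedDistToInt y| ≤ 1/2 := by
  have hf0 : (⌊y⌋ : ℝ) ≤ y := Int.floor_le y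
  have hf1 : y < ⌊y⌋ + 1 := Int.lt_floor_add_one y
  unfold signedDistToInt nearestInt
  split_ifs with h <;> rw [abs_le] <;> push_cast <;> constructor <;> linarith

lemma signedDist_eq (y : ℝ) (m : ℤ) (h : |y - m| < 1/2) : signedDistToInt y = y - m := by
  rw [abs_lt] at h
  have hne : nearestInt y = m := by
    unfold nearestInt
    rcases le_or_gt (m : ℝ) y with hy | hy
    · have hf : ⌊y⌋ = m := by
        rw [Int.floor_eq_iff]; constructor <;> push_cast <;> linarith
      rw [hf, if_pos (by linarith)]
    · have hf : ⌊y⌋ = m - 1 := by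
        rw [Int.floor_eq_iff]; constructor <;> push_cast <;> linarith
      rw [hf, if_neg (by push_cast; intro hc; linarith)]
      omega
  unfold signedDistToInt; rw [hne]

lemma signedDist_ne_zero {y : ℝ} (hy : Irrational y) : signedDistToInt y ≠ 0 := by
  intro h0
  have : y = (nearestInt y : ℝ) := by unfold signedDistToInt at h0; linarith
  exact hy.ne_int (nearestInt y) this

/-- If `x` is irrational, then `|d(n! · x)| ≥ 1/(2(n+1))` for infinitely many positive
integers `n`. -/
theorem infinite_good_factorial_distances (x : ℝ) (hx : Irrational x) :
    {n : ℕ | 0 < n ∧ 1 / (2 * ((n : ℝ) + 1)) ≤ |signedDistToInt ((n.factorial : ℝ) * x)|}.Infinite := by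
  set d : ℕ → ℝ := fun n => signedDistToInt ((n.factorial : ℝ) * x) with hd
  by_contra hfin
  rw [Set.not_infinite] at hfin
  obtain ⟨M, hM⟩ := hfin.bddAbove
  set N := M + 1 with hNdef
  have H : ∀ n, N ≤ n → |d n| < 1 / (2 * ((n:ℝ)+1)) := by
    intro n hn
    by_contra hc
    push_neg at hc
    have hmem : n ∈ {n : ℕ | 0 < n ∧ 1 / (2 * ((n : ℝ) + 1)) ≤ |signedDistToInt ((n.factorial : ℝ) * x)|} :=
      ⟨by omega, hc⟩
    have := hM hmem
    omega
  have hdN : d N ≠ 0 := by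
    apply signedDist_ne_zero
    exact (hx.natCast_mul (Nat.factorial_ne_zero N))
  have hdNpos : 0 < |d N| := abs_pos.mpr hdN
  have key : ∀ k, 2^k * |d N| ≤ |d (N + k)| := by
    intro k
    induction k with
    | zero => simp
    | succ k ih =>
      set n := N + k with hn
      have hNn : N ≤ n := Nat.le_add_right _ _
      have hb := H n hNn
      have hpos : (0:ℝ) < (n:ℝ) + 1 := by positivity
      have hlt : ((n:ℝ)+1) * |d n| < 1/2 := by
        have h1 : ((n:ℝ)+1) * |d n| < ((n:ℝ)+1) * (1 / (2 * ((n:ℝ)+1))) :=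
          mul_lt_mul_of_pos_left hb hpos
        have h2 : ((n:ℝ)+1) * (1 / (2 * ((n:ℝ)+1))) = 1/2 := by field_simp
        linarith
    -- step : d (n+1) = (n+1) * d n
      set e : ℤ := nearestInt ((n.factorial : ℝ) * x) with he
      have hm : ((n+1).factorial : ℝ) * x - (((n:ℤ)+1) * e : ℤ) = ((n:ℝ)+1) * d n := by
        simp only [hd, signedDistToInt, ← he]
        push_cast [Nat.factorial_succ]
        ring
      have habs : |((n:ℝ)+1) * d n| = ((n:ℝ)+1) * |d n| := by
        rw [abs_mul, abs_of_pos hpos]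
      have hstep : d (n+1) = ((n:ℝ)+1) * d n := by
        have h := signedDist_eq (((n+1).factorial : ℝ) * x) (((n:ℤ)+1) * e)
          (by rw [hm, habs]; exact hlt)
        rw [hm] at h
        simpa [hd] using h
      have hN2 : (2:ℝ) ≤ (n:ℝ) + 1 := by
        have : 1 ≤ n := by omega
        have : (1:ℝ) ≤ (n:ℝ) := by exact_mod_cast this
        linarith
      have : |d (n+1)| = ((n:ℝ)+1) * |d n| := by rw [hstep, habs]
      calc 2^(k+1) * |d N| = 2 * (2^k * |d N|) := by ring
        _ ≤ 2 * |d n| := by linarith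
        _ ≤ ((n:ℝ)+1) * |d n| := by nlinarith [abs_nonneg (d n)]
        _ = |d (n+1)| := by rw [hstep, habs]
  obtain ⟨k, hk⟩ := pow_unbounded_of_one_lt ((1/2) / |d N|) (by norm_num : (1:ℝ) < 2)
  have h1 : 1/2 < 2^k * |d N| := by
    rw [div_lt_iff₀ hdNpos] at hk
    linarith
  have h2 := key k
  have h3 := abs_signedDist_le ((((N+k).factorial : ℝ)) * x)
  have : |d (N+k)| ≤ 1/2 := h3
  linarith

end
end

section
/- Fix τ₀ in the upper half plane ℍ. For every positive integer n and every z ∈ ℂ, |θ₁₁(n! · z; τ₀)| ≥ |θ₁₁(d(n! · z); τ₀)|. -/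
open Filter Topology

noncomputable section

/-- The elliptic theta function
`θ₁₁(z;τ) = ∑_{m ∈ ℤ} exp(π√-1((m+1/2)²τ + 2(m+1/2)(z+1/2)))`. -/
def theta (z τ : ℂ) : ℂ :=
  ∑' m : ℤ, Complex.exp ((Real.pi : ℂ) * Complex.I *
    (((m : ℂ) + 1 / 2) ^ 2 * τ + 2 * ((m : ℂ) + 1 / 2) * (z + 1 / 2)))

lemma theta_shift (τ z : ℂ) (a b : ℤ) :
    theta z τ = Complex.exp ((Real.pi : ℂ) * Complex.I *
      ((a : ℂ) ^ 2 * τ + 2 * (a : ℂ) * (z + 1 / 2) - (b : ℂ))) *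
      theta (z + (a : ℂ) * τ + (b : ℂ)) τ := by
  unfold theta
  rw [← tsum_mul_left, ← (Equiv.addRight a).tsum_eq]
  apply tsum_congr
  intro m
  simp only [Equiv.coe_addRight]
  rw [← Complex.exp_add]
  have h : (Real.pi : ℂ) * Complex.I *
      ((((m + a : ℤ) : ℂ) + 1 / 2) ^ 2 * τ + 2 * (((m + a : ℤ) : ℂ) + 1 / 2) * (z + 1 / 2)) =
      ((Real.pi : ℂ) * Complex.I *
        ((a : ℂ) ^ 2 * τ + 2 * (a : ℂ) * (z + 1 / 2) - (b : ℂ)) +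
       (Real.pi : ℂ) * Complex.I *
        (((m : ℂ) + 1 / 2) ^ 2 * τ +
          2 * ((m : ℂ) + 1 / 2) * ((z + (a : ℂ) * τ + (b : ℂ)) + 1 / 2))) +
      ((-(m * b) : ℤ) : ℂ) * (2 * (Real.pi : ℂ) * Complex.I) := by
    push_cast; ring
  rw [h, Complex.exp_add, Complex.exp_int_mul_two_pi_mul_I, mul_one]

lemma nearest_sq_le (x : ℝ) : (x - (nearestInt x : ℝ)) ^ 2 ≤ x ^ 2 := by
  have h1 : (⌊x⌋ : ℝ) ≤ x := Int.floor_le x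
  have h2 : x < (⌊x⌋ : ℝ) + 1 := Int.lt_floor_add_one x
  have key : ((nearestInt x : ℝ)) - 1/2 ≤ x ∧ x ≤ ((nearestInt x : ℝ)) + 1/2 := by
    unfold nearestInt
    split <;> push_cast <;> constructor <;> linarith
  set a := nearestInt x with ha
  rcases lt_trichotomy a 0 with h | h | h
  · have h' : a ≤ -1 := by omega
    have : (a : ℝ) ≤ -1 := by exact_mod_cast h'
    nlinarith [key.1, key.2]
  · simp [h]
  · have : (1 : ℝ) ≤ a := by exact_mod_cast h
    nlinarith [key.1, key.2]

/-- For `τ₀ ∈ ℍ`, `n ≥ 1` and `z ∈ ℂ`, one has `|θ₁₁(n!z; τ₀)| ≥ |θ₁₁(d(n!z); τ₀)|`, where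
`d(n!z) = n!z − e(x)τ₀ − e(y)` is computed from the real coordinates `n!z = xτ₀ + y`. -/
theorem theta_abs_ge_theta_abs_of_nearest (τ₀ : ℂ) (hτ₀ : 0 < τ₀.im)
    (n : ℕ) (hn : 1 ≤ n) (z : ℂ) (x y : ℝ)
    (hxy : (n.factorial : ℂ) * z = (x : ℂ) * τ₀ + (y : ℂ)) :
    ‖theta ((n.factorial : ℂ) * z -
        ((nearestInt x : ℂ) * τ₀ + (nearestInt y : ℂ))) τ₀‖
      ≤ ‖theta ((n.factorial : ℂ) * z) τ₀‖ := by
  set w : ℂ := (n.factorial : ℂ) * z with hw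
  set a : ℤ := nearestInt x
  set b : ℤ := nearestInt y
  have key := theta_shift τ₀ (w - ((a : ℂ) * τ₀ + (b : ℂ))) a b
  have harg : w - ((a : ℂ) * τ₀ + (b : ℂ)) + (a : ℂ) * τ₀ + (b : ℂ) = w := by ring
  rw [harg] at key
  rw [key, norm_mul]
  have habs : ‖Complex.exp ((Real.pi : ℂ) * Complex.I *
      ((a : ℂ) ^ 2 * τ₀ + 2 * (a : ℂ) * ((w - ((a : ℂ) * τ₀ + (b : ℂ))) + 1 / 2) - (b : ℂ)))‖ ≤ 1 := by
    rw [Complex.norm_exp, Real.exp_le_one_iff]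
    have hwim : w.im = x * τ₀.im := by
      rw [hxy]
      simp [Complex.add_im, Complex.mul_im]
    have hre : ((Real.pi : ℂ) * Complex.I *
        ((a : ℂ) ^ 2 * τ₀ + 2 * (a : ℂ) * ((w - ((a : ℂ) * τ₀ + (b : ℂ))) + 1 / 2) - (b : ℂ))).re
        = -Real.pi * ((a : ℝ) ^ 2 * τ₀.im + 2 * (a : ℝ) * (w.im - (a : ℝ) * τ₀.im)) := by
      simp [Complex.mul_re, Complex.mul_im, Complex.add_re, Complex.add_im,
        Complex.sub_re, Complex.sub_im, pow_two, Complex.intCast_re, Complex.intCast_im]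
    rw [hre, hwim]
    have hx2 : (x - (a : ℝ)) ^ 2 ≤ x ^ 2 := nearest_sq_le x
    nlinarith [Real.pi_pos, hτ₀, mul_nonneg (le_of_lt hτ₀) (sub_nonneg.2 hx2)]
  calc ‖Complex.exp _‖ * ‖theta w τ₀‖
      ≤ 1 * ‖theta w τ₀‖ := by
        apply mul_le_mul_of_nonneg_right habs (norm_nonneg _)
    _ = ‖theta w τ₀‖ := one_mul _

end
end
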